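/- arXiv:2308.07829 — 6 statements merged into one kernel-verified Lean document; each statement's English description precedes it below -/
import Mathlib

section
/- Let λ : ℕ → ℝ satisfy λ_{p+1} ≥ λ_p + 1 for all p ≥ 0, with γ_p := λ_p − λ_{p−1} − 1 ≥ 0 and ∑_{p≥1} γ_p = −λ_0 < ∞. Then for every n ≥ 1, ∑_{p≥1, p≠n} γ_p/|λ_p − λ_n| ≤ (2/n)·(−λ_0) + ∑_{p ≥ n/2} γ_p. -/
/-- Under the gap condition and the trace formula, for every `n ≥ 1` one has
`∑_{p≥1, p≠n} γ_p/|λ_p − λ_n| ≤ (2/n)·(−λ_0) + ∑_{p ≥ n/2} γ_p`. -/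
theorem stmt_5 (lam : ℕ → ℝ) (hgap : ∀ p : ℕ, lam p + 1 ≤ lam (p + 1))
    (hsum : HasSum (fun p : ℕ => lam (p + 1) - lam p - 1) (-(lam 0))) :
    ∀ n : ℕ, 1 ≤ n →
      (∑' p : ℕ, if 1 ≤ p ∧ p ≠ n then (lam p - lam (p - 1) - 1) / |lam p - lam n| else 0)
        ≤ (2 / (n : ℝ)) * (-(lam 0)) +
            ∑' p : ℕ, if n ≤ 2 * p then lam p - lam (p - 1) - 1 else 0 := by
  intro n hn
  -- gap growth: lam a + k ≤ lam (a + k)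
  have hgrow : ∀ a k : ℕ, lam a + (k : ℝ) ≤ lam (a + k) := by
    intro a k
    induction k with
    | zero => simp
    | succ k ih =>
      have := hgap (a + k)
      push_cast
      push_cast at ih
      calc lam a + ((k : ℝ) + 1) = (lam a + k) + 1 := by ring
        _ ≤ lam (a + k) + 1 := by linarith
        _ ≤ lam (a + k + 1) := hgap (a + k)
  have hdist : ∀ p : ℕ, |(p : ℝ) - n| ≤ |lam p - lam n| := by
    intro p
    rcases le_total p n with h | h
    · have := hgrow p (n - p)
      rw [Nat.add_sub_cancel' h] at this
      have hc : ((n - p : ℕ) : ℝ) = (n : ℝ) - p := by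
        push_cast [Nat.cast_sub h]; ring
      rw [hc] at this
      have h1 : |(p : ℝ) - n| = (n : ℝ) - p := by
        rw [abs_sub_comm, abs_of_nonneg] ; exact sub_nonneg.2 (by exact_mod_cast h)
      have h2 : (n : ℝ) - p ≤ lam n - lam p := by linarith
      calc |(p : ℝ) - n| = (n : ℝ) - p := h1
        _ ≤ lam n - lam p := h2
        _ ≤ |lam n - lam p| := le_abs_self _
        _ = |lam p - lam n| := abs_sub_comm _ _
    · have := hgrow n (p - n)
      rw [Nat.add_sub_cancel' h] at this
      have hc : ((p - n : ℕ) : ℝ) = (p : ℝ) - n := by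
        push_cast [Nat.cast_sub h]; ring
      rw [hc] at this
      have h1 : |(p : ℝ) - n| = (p : ℝ) - n := by
        rw [abs_of_nonneg]; exact sub_nonneg.2 (by exact_mod_cast h)
      calc |(p : ℝ) - n| = (p : ℝ) - n := h1
        _ ≤ lam p - lam n := by linarith
        _ ≤ |lam p - lam n| := le_abs_self _
  have hγpos : ∀ p : ℕ, 1 ≤ p → 0 ≤ lam p - lam (p - 1) - 1 := by
    intro p hp
    have h := hgap (p - 1)
    have hpe : p - 1 + 1 = p := by omega
    rw [hpe] at h
    linarith
  set g : ℕ → ℝ := fun p => if 1 ≤ p then lam p - lam (p - 1) - 1 else 0 with hgdef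
  have hg : HasSum g (-(lam 0)) := by
    have hinj : Function.Injective Nat.succ := Nat.succ_injective
    have h0 : ∀ x : ℕ, x ∉ Set.range Nat.succ → g x = 0 := by
      intro x hx
      have hx0 : x = 0 := by
        by_contra hne
        exact hx ⟨x - 1, Nat.succ_pred_eq_of_pos (Nat.pos_of_ne_zero hne)⟩
      simp [hgdef, hx0]
    have key : (g ∘ Nat.succ) = fun p : ℕ => lam (p + 1) - lam p - 1 := by
      funext p
      simp [hgdef, Nat.succ_eq_add_one]
    exact (Function.Injective.hasSum_iff hinj h0).mp (by rw [key]; exact hsum)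
  have hg0 : ∀ p, 0 ≤ g p := by
    intro p
    simp only [hgdef]
    split
    · next h => exact hγpos p h
    · exact le_rfl
  set H : ℕ → ℝ := fun p => if n ≤ 2 * p then lam p - lam (p - 1) - 1 else 0 with hHdef
  have hHg : ∀ p, H p ≤ g p ∧ 0 ≤ H p := by
    intro p
    simp only [hHdef, hgdef]
    split
    · next h =>
      have hp1 : 1 ≤ p := by omega
      simp only [hp1, if_true]
      exact ⟨le_rfl, hγpos p hp1⟩
    · exact ⟨hg0 p, le_rfl⟩
  have hHsum : Summable H := by
    exact Summable.of_nonneg_of_le (fun p => (hHg p).2) (fun p => (hHg p).1) hg.summable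
  set K : ℕ → ℝ := fun p => (2 / (n : ℝ)) * g p + H p with hKdef
  have hnpos : (0 : ℝ) < n := by exact_mod_cast hn
  have hKsum : HasSum K ((2 / (n : ℝ)) * (-(lam 0)) + ∑' p, H p) :=
    (hg.mul_left _).add hHsum.hasSum
  set F : ℕ → ℝ := fun p =>
    if 1 ≤ p ∧ p ≠ n then (lam p - lam (p - 1) - 1) / |lam p - lam n| else 0 with hFdef
  have hF0 : ∀ p, 0 ≤ F p := by
    intro p
    simp only [hFdef]
    split
    · next h => exact div_nonneg (hγpos p h.1) (abs_nonneg _)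
    · exact le_rfl
  have hpt : ∀ p, F p ≤ K p := by
    intro p
    simp only [hFdef, hKdef]
    split
    · next h =>
      obtain ⟨hp1, hpn⟩ := h
      have hγ : 0 ≤ lam p - lam (p - 1) - 1 := hγpos p hp1
      have hgp : g p = lam p - lam (p - 1) - 1 := by simp [hgdef, hp1]
      have hd1 : (1 : ℝ) ≤ |lam p - lam n| := by
        refine le_trans ?_ (hdist p)
        rcases lt_or_gt_of_ne hpn with h | h
        · rw [abs_sub_comm, abs_of_nonneg (sub_nonneg.2 (by exact_mod_cast h.le))]
          have : (p : ℝ) + 1 ≤ n := by exact_mod_cast h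
          linarith
        · rw [abs_of_nonneg (sub_nonneg.2 (by exact_mod_cast h.le))]
          have : (n : ℝ) + 1 ≤ p := by exact_mod_cast h
          linarith
      have hdpos : (0 : ℝ) < |lam p - lam n| := lt_of_lt_of_le one_pos hd1
      by_cases hcase : n ≤ 2 * p
      · have hH : H p = lam p - lam (p - 1) - 1 := by simp [hHdef, hcase]
        have h1 : (lam p - lam (p - 1) - 1) / |lam p - lam n| ≤ lam p - lam (p - 1) - 1 := by
          calc (lam p - lam (p - 1) - 1) / |lam p - lam n|
              ≤ (lam p - lam (p - 1) - 1) / 1 := by gcongr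
            _ = lam p - lam (p - 1) - 1 := div_one _
        have h2 : 0 ≤ (2 / (n : ℝ)) * g p := by positivity
        rw [hH] at *
        linarith [hg0 p]
      · -- 2p < n, so |lam p - lam n| ≥ n - p ≥ n/2
        have hH : H p = 0 := by simp [hHdef, hcase]
        have hd2 : (n : ℝ) / 2 ≤ |lam p - lam n| := by
          refine le_trans ?_ (hdist p)
          have hpn' : (2 * p : ℕ) < n := lt_of_not_ge hcase
          have hple : p ≤ n := by omega
          have h1 : |(p : ℝ) - n| = (n : ℝ) - p := by
            rw [abs_sub_comm, abs_of_nonneg]; exact sub_nonneg.2 (by exact_mod_cast hple)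
          rw [h1]
          have : (2 * p : ℝ) < n := by exact_mod_cast hpn'
          linarith
        have hn0 : (n : ℝ) ≠ 0 := ne_of_gt hnpos
        have h1 : (lam p - lam (p - 1) - 1) / |lam p - lam n| ≤
            (2 / (n : ℝ)) * (lam p - lam (p - 1) - 1) := by
          calc (lam p - lam (p - 1) - 1) / |lam p - lam n|
              ≤ (lam p - lam (p - 1) - 1) / ((n : ℝ) / 2) := by
                gcongr
            _ = (2 / (n : ℝ)) * (lam p - lam (p - 1) - 1) := by
                field_simp
        rw [hH, hgp]
        linarith
    · next h =>
      have h1 : 0 ≤ (2 / (n : ℝ)) * g p := by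
        have := hg0 p; positivity
      linarith [(hHg p).2]
  have hFsum : Summable F := Summable.of_nonneg_of_le hF0 hpt hKsum.summable
  calc (∑' p, F p) ≤ ∑' p, K p := Summable.tsum_le_tsum hpt hFsum hKsum.summable
    _ = (2 / (n : ℝ)) * (-(lam 0)) + ∑' p, H p := hKsum.tsum_eq
end

section
/- Let (f_n)_{n≥0} be an orthonormal basis of a Hilbert space H = L²_+ and let (λ_n)_{n≥0} be real numbers with n + λ₀ ≤ λ_n ≤ n and λ₀ ≤ 0. Fix λ• < λ₀. Suppose there are constants 0 < c < C such that for every f in a dense subspace V, c‖f‖²_{1/2} ≤ ∑_{n≥0}(λ_n − λ•)|⟨f,f_n⟩|² ≤ C(1+|λ•|)‖f‖²_{1/2}, where ‖f‖²_{1/2} := ∑_{n≥0}(n+1)|f̂(n)|² for some fixed orthonormal basis (e_n). Then there exists 0 < κ₁ < 1 with κ₁² ∑_{n≥0}(n+1)|f̂(n)|² ≤ ∑_{n≥0}(n+1)|⟨f,f_n⟩|² ≤ κ₁^{-2} ∑_{n≥0}(n+1)|f̂(n)|² for all f ∈ V. -/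
set_option maxHeartbeats 1000000 in
/-- Two-sided equivalence between the `H^{1/2}` norm (with respect to the standard
orthonormal basis `e`) and the norm given by the eigenfunction expansion `f`. -/
theorem stmt_10 {H : Type*} [NormedAddCommGroup H] [InnerProductSpace ℂ H] [CompleteSpace H]
    (e f : ℕ → H) (he : Orthonormal ℂ e) (hf : Orthonormal ℂ f)
    (lam : ℕ → ℝ) (lamb : ℝ) (hlam0 : lam 0 ≤ 0)
    (hlam : ∀ n : ℕ, (n : ℝ) + lam 0 ≤ lam n ∧ lam n ≤ (n : ℝ))
    (hlamb : lamb < lam 0)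
    (V : Set H) (hV : Dense V) (c C : ℝ) (hc : 0 < c) (hcC : c < C)
    (hequiv : ∀ v ∈ V,
      c * ∑' n : ℕ, ((n : ℝ) + 1) * ‖(inner ℂ v (e n) : ℂ)‖ ^ 2
          ≤ ∑' n : ℕ, (lam n - lamb) * ‖(inner ℂ v (f n) : ℂ)‖ ^ 2 ∧
      ∑' n : ℕ, (lam n - lamb) * ‖(inner ℂ v (f n) : ℂ)‖ ^ 2
          ≤ C * (1 + |lamb|) * ∑' n : ℕ, ((n : ℝ) + 1) * ‖(inner ℂ v (e n) : ℂ)‖ ^ 2) :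
    ∃ κ : ℝ, 0 < κ ∧ κ < 1 ∧ ∀ v ∈ V,
      κ ^ 2 * ∑' n : ℕ, ((n : ℝ) + 1) * ‖(inner ℂ v (e n) : ℂ)‖ ^ 2
          ≤ ∑' n : ℕ, ((n : ℝ) + 1) * ‖(inner ℂ v (f n) : ℂ)‖ ^ 2 ∧
      ∑' n : ℕ, ((n : ℝ) + 1) * ‖(inner ℂ v (f n) : ℂ)‖ ^ 2
          ≤ κ⁻¹ ^ 2 * ∑' n : ℕ, ((n : ℝ) + 1) * ‖(inner ℂ v (e n) : ℂ)‖ ^ 2 := by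
  classical
  set δ : ℝ := lam 0 - lamb with hδ
  have hδpos : 0 < δ := by simp [hδ]; linarith
  set m : ℝ := min δ 1 with hm
  have hmpos : 0 < m := lt_min hδpos one_pos
  have hm1 : m ≤ 1 := min_le_right _ _
  have hmδ : m ≤ δ := min_le_left _ _
  set M : ℝ := 1 + |lamb| with hM
  have hMpos : 0 < M := by positivity
  have hC : 0 < C := lt_trans hc hcC
  -- pointwise bounds on the eigenvalue weights
  have hlow : ∀ n : ℕ, m * ((n : ℝ) + 1) ≤ lam n - lamb := by
    intro n
    have h1 := (hlam n).1
    have : (n : ℝ) + δ ≤ lam n - lamb := by simp [hδ]; linarith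
    nlinarith [Nat.cast_nonneg (α := ℝ) n]
  have hhigh : ∀ n : ℕ, lam n - lamb ≤ M * ((n : ℝ) + 1) := by
    intro n
    have h2 := (hlam n).2
    have hlneg : lamb ≤ 0 := le_of_lt (lt_of_lt_of_le hlamb hlam0)
    have habs : |lamb| = -lamb := abs_of_nonpos hlneg
    have : lam n - lamb ≤ (n : ℝ) + |lamb| := by rw [habs]; linarith
    have hM' : (n : ℝ) + |lamb| ≤ M * ((n : ℝ) + 1) := by
      have := abs_nonneg lamb
      nlinarith [Nat.cast_nonneg (α := ℝ) n]
    linarith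
  -- choose κ
  set r : ℝ := min (c / M) (m / (C * M)) with hr
  have hrpos : 0 < r := lt_min (by positivity) (by positivity)
  refine ⟨min (1/2) (Real.sqrt r), lt_min (by norm_num) (Real.sqrt_pos.mpr hrpos),
    lt_of_le_of_lt (min_le_left _ _) (by norm_num), ?_⟩
  set κ : ℝ := min (1/2) (Real.sqrt r) with hκ
  have hκpos : 0 < κ := lt_min (by norm_num) (Real.sqrt_pos.mpr hrpos)
  have hκsq : κ ^ 2 ≤ r := by
    have h1 : κ ≤ Real.sqrt r := min_le_right _ _
    have := Real.sq_sqrt hrpos.le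
    nlinarith [hκpos.le, Real.sqrt_nonneg r]
  have hκ1 : κ ^ 2 ≤ c / M := le_trans hκsq (min_le_left _ _)
  have hκ2 : κ ^ 2 ≤ m / (C * M) := le_trans hκsq (min_le_right _ _)
  have hκ1' : κ ^ 2 * M ≤ c := by
    rw [le_div_iff₀ hMpos] at hκ1; exact hκ1
  have hκ2' : κ ^ 2 * (C * M) ≤ m := by
    have hCM : 0 < C * M := by positivity
    rw [le_div_iff₀ hCM] at hκ2; exact hκ2
  intro v hv
  obtain ⟨h1, h2⟩ := hequiv v hv
  set E : ℝ := ∑' n : ℕ, ((n : ℝ) + 1) * ‖(inner ℂ v (e n) : ℂ)‖ ^ 2 with hE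
  set a : ℕ → ℝ := fun n => ((n : ℝ) + 1) * ‖(inner ℂ v (f n) : ℂ)‖ ^ 2 with ha
  set b : ℕ → ℝ := fun n => (lam n - lamb) * ‖(inner ℂ v (f n) : ℂ)‖ ^ 2 with hb
  have hanonneg : ∀ n, 0 ≤ a n := fun n => by positivity
  have hEnonneg : 0 ≤ E := tsum_nonneg (fun n => by positivity)
  have hab : ∀ n, m * a n ≤ b n := by
    intro n
    have := hlow n
    have hn : (0:ℝ) ≤ ‖(inner ℂ v (f n) : ℂ)‖ ^ 2 := by positivity
    simp only [ha, hb]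
    nlinarith
  have hba : ∀ n, b n ≤ M * a n := by
    intro n
    have := hhigh n
    have hn : (0:ℝ) ≤ ‖(inner ℂ v (f n) : ℂ)‖ ^ 2 := by positivity
    simp only [ha, hb]
    nlinarith
  have hbnonneg : ∀ n, 0 ≤ b n := fun n => le_trans (by nlinarith [hanonneg n, hmpos.le]) (hab n)
  by_cases hsa : Summable a
  · -- main case
    have hsb : Summable b := Summable.of_nonneg_of_le hbnonneg hba (hsa.mul_left M)
    have hT1 : m * (∑' n, a n) ≤ ∑' n, b n := by
      rw [← tsum_mul_left]
      exact Summable.tsum_le_tsum hab (hsa.mul_left m) hsb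
    have hT2 : (∑' n, b n) ≤ M * (∑' n, a n) := by
      rw [← tsum_mul_left]
      exact Summable.tsum_le_tsum hba hsb (hsa.mul_left M)
    set T : ℝ := ∑' n, a n with hT
    set S : ℝ := ∑' n, b n with hS
    have hTnonneg : 0 ≤ T := tsum_nonneg hanonneg
    constructor
    · -- κ² E ≤ T
      have : c * E ≤ M * T := le_trans h1 hT2
      nlinarith
    · -- T ≤ κ⁻² E
      have h3 : m * T ≤ C * M * E := le_trans hT1 (by rw [hM]; exact h2)
      have hκT : κ ^ 2 * T ≤ E := by nlinarith
      have : T ≤ (κ ^ 2)⁻¹ * E := by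
        rw [inv_mul_eq_div, le_div_iff₀ (by positivity : (0:ℝ) < κ ^ 2)]
        nlinarith
      calc T ≤ (κ ^ 2)⁻¹ * E := this
      _ = κ⁻¹ ^ 2 * E := by rw [inv_pow]
  · -- degenerate case: everything diverges, tsums are 0
    have hsb : ¬ Summable b := by
      intro hsb
      apply hsa
      have : ∀ n, a n ≤ m⁻¹ * b n := by
        intro n
        have := hab n
        rw [inv_mul_eq_div, le_div_iff₀ hmpos] at *
        linarith [hab n]
      exact Summable.of_nonneg_of_le hanonneg this (hsb.mul_left m⁻¹)
    have hT0 : (∑' n, a n) = 0 := tsum_eq_zero_of_not_summable hsa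
    have hS0 : (∑' n, b n) = 0 := tsum_eq_zero_of_not_summable hsb
    rw [hS0] at h1
    have hE0 : E ≤ 0 := by nlinarith
    constructor
    · rw [hT0]; nlinarith
    · rw [hT0]
      have : E = 0 := le_antisymm hE0 hEnonneg
      rw [this]; simp
end

section
/- For any u, v ∈ H^{1/2}(𝕋,ℂ), the pointwise product uv belongs to H^{1/2,1/√log}(𝕋,ℂ), i.e. ∑_{n∈ℤ} (max(1,|n|)/log(max(1,|n|)+1)) |ûv(n)|² < ∞, and there is a constant C > 0 with ‖uv‖_{1/2,1/√log} ≤ C ‖u‖_{1/2} ‖v‖_{1/2}. -/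
/-- The weight `⟨n⟩ = max(1,|n|)` as a real number. -/
noncomputable def wt (n : ℤ) : ℝ := ((max 1 |n| : ℤ) : ℝ)

/-- The convolution of two Fourier coefficient sequences (the Fourier coefficients of the
pointwise product). -/
noncomputable def conv (u v : ℤ → ℂ) (n : ℤ) : ℂ := ∑' k : ℤ, u k * v (n - k)




lemma wt_eq (n : ℤ) : wt n = max 1 |(n : ℝ)| := by
  unfold wt
  rw [Int.cast_max, Int.cast_abs, Int.cast_one]

lemma one_le_wt (n : ℤ) : 1 ≤ wt n := by rw [wt_eq]; exact le_max_left _ _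

lemma wt_pos (n : ℤ) : 0 < wt n := lt_of_lt_of_le one_pos (one_le_wt n)

lemma abs_le_wt (n : ℤ) : |(n : ℝ)| ≤ wt n := by rw [wt_eq]; exact le_max_right _ _

lemma wt_eq_natAbs (n : ℤ) : wt n = max 1 (n.natAbs : ℝ) := by
  rw [wt_eq]
  congr 1
  rw [Nat.cast_natAbs, Int.cast_abs]

lemma wt_le_add (n k : ℤ) : wt n ≤ wt k + wt (n - k) := by
  rw [wt_eq]
  apply max_le
  · linarith [one_le_wt k, (wt_pos (n - k)).le]
  · calc |(n : ℝ)| = |(k : ℝ) + ((n - k : ℤ) : ℝ)| := by push_cast; ring_nf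
      _ ≤ |(k : ℝ)| + |((n - k : ℤ) : ℝ)| := abs_add_le _ _
      _ ≤ wt k + wt (n - k) := add_le_add (abs_le_wt k) (abs_le_wt (n - k))

lemma summable_inv_wt_sq : Summable (fun k : ℤ => ((wt k) ^ 2)⁻¹) := by
  apply Summable.of_norm_bounded_eventually (g := fun k : ℤ => 1 / (k : ℝ) ^ 2)
    (Real.summable_one_div_int_pow.2 one_lt_two)
  have hfin : ({0} : Set ℤ).Finite := Set.finite_singleton 0
  apply Filter.mem_of_superset hfin.compl_mem_cofinite
  intro k hk
  have hk0 : k ≠ 0 := by simpa using hk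
  have h1 : (1 : ℝ) ≤ |(k : ℝ)| := by
    have : (1 : ℤ) ≤ |k| := Int.one_le_abs hk0
    calc (1:ℝ) ≤ ((|k| : ℤ) : ℝ) := by exact_mod_cast this
      _ = |(k : ℝ)| := by push_cast; rfl
  have hwk : wt k = |(k : ℝ)| := by rw [wt_eq]; exact max_eq_right h1
  simp only [Set.mem_setOf_eq]
  have : ‖((wt k) ^ 2)⁻¹‖ = ((wt k) ^ 2)⁻¹ := by
    rw [Real.norm_eq_abs, abs_of_nonneg (by positivity)]
  rw [this, hwk, ← sq_abs (k:ℝ), one_div]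


open Finset in
lemma sum_natAbs_le (s : Finset ℤ) (F : ℕ → ℝ) (hF : ∀ m, 0 ≤ F m) :
    ∑ k ∈ s, F k.natAbs ≤ 2 * ∑ m ∈ s.image Int.natAbs, F m := by
  classical
  rw [← Finset.sum_fiberwise_of_maps_to (fun k hk => Finset.mem_image_of_mem Int.natAbs hk)
    (fun k => F k.natAbs), Finset.mul_sum]
  apply Finset.sum_le_sum
  intro m _
  have heq : ∑ k ∈ s.filter (fun k => k.natAbs = m), F k.natAbs
      = ∑ _k ∈ s.filter (fun k => k.natAbs = m), F m := by
    refine Finset.sum_congr rfl fun k hk => ?_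
    rw [(Finset.mem_filter.1 hk).2]
  rw [heq, Finset.sum_const, nsmul_eq_mul]
  have hsub : s.filter (fun k => k.natAbs = m) ⊆ {(m : ℤ), -(m : ℤ)} := by
    intro k hk
    have h := (Finset.mem_filter.1 hk).2
    rw [Finset.mem_insert, Finset.mem_singleton]
    rcases Int.natAbs_eq k with h1 | h1
    · left; rw [h1, h]
    · right; rw [h1, h]
  have hcard : (s.filter (fun k => k.natAbs = m)).card ≤ 2 := by
    refine (Finset.card_le_card hsub).trans ?_
    exact (Finset.card_insert_le _ _).trans (by simp)
  exact mul_le_mul_of_nonneg_right (by exact_mod_cast hcard) (hF m)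

lemma sum_inv_wt_le {M : ℝ} (hM : 1 ≤ M) (s : Finset ℤ) (hs : ∀ k ∈ s, |(k : ℝ)| ≤ M) :
    ∑ k ∈ s, (wt k)⁻¹ ≤ 4 + 2 * Real.log M := by
  classical
  have h1 : ∑ k ∈ s, (wt k)⁻¹ = ∑ k ∈ s, (fun m : ℕ => (max 1 (m : ℝ))⁻¹) k.natAbs := by
    exact Finset.sum_congr rfl fun k _ => by rw [wt_eq_natAbs]
  rw [h1]
  refine (sum_natAbs_le s (fun m : ℕ => (max 1 (m : ℝ))⁻¹) (fun m => by positivity)).trans ?_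
  have h3 : s.image Int.natAbs ⊆ Finset.range (⌊M⌋₊ + 1) := by
    intro m hm
    rcases Finset.mem_image.1 hm with ⟨k, hk, rfl⟩
    rw [Finset.mem_range, Nat.lt_succ_iff]
    apply Nat.le_floor
    have hcast : (k.natAbs : ℝ) = |(k : ℝ)| := by
      rw [Nat.cast_natAbs, Int.cast_abs]
    rw [hcast]; exact hs k hk
  have hF1 : 1 ≤ ⌊M⌋₊ := Nat.le_floor (by exact_mod_cast hM)
  have h4 : ∑ m ∈ s.image Int.natAbs, (max 1 (m:ℝ))⁻¹
      ≤ ∑ m ∈ Finset.range (⌊M⌋₊ + 1), (max 1 (m:ℝ))⁻¹ :=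
    Finset.sum_le_sum_of_subset_of_nonneg h3 (fun m _ _ => by positivity)
  have h5 : ∑ m ∈ Finset.range (⌊M⌋₊ + 1), (max 1 (m:ℝ))⁻¹ = (harmonic ⌊M⌋₊ : ℝ) + 1 := by
    rw [Finset.sum_range_succ']
    congr 1
    · rw [harmonic]
      push_cast
      refine Finset.sum_congr rfl fun i _ => ?_
      congr 1
      exact max_eq_right (by exact_mod_cast Nat.one_le_iff_ne_zero.2 (Nat.succ_ne_zero i))
    · norm_num
  have h6 : (harmonic ⌊M⌋₊ : ℝ) ≤ 1 + Real.log ⌊M⌋₊ := harmonic_le_one_add_log _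
  have h7 : Real.log ⌊M⌋₊ ≤ Real.log M := by
    have hpos : (0:ℝ) < ⌊M⌋₊ := by exact_mod_cast Nat.lt_of_lt_of_le Nat.zero_lt_one hF1
    exact Real.log_le_log hpos (Nat.floor_le (by linarith))
  linarith


lemma sum_inv_wt_sq_tail {N : ℕ} (hN : 1 ≤ N) (s : Finset ℤ)
    (hs : ∀ k ∈ s, (2 * N : ℝ) < |(k : ℝ)|) :
    ∑ k ∈ s, ((wt k) ^ 2)⁻¹ ≤ 2 / N := by
  classical
  have h1 : ∑ k ∈ s, ((wt k) ^ 2)⁻¹ = ∑ k ∈ s, (fun m : ℕ => ((m : ℝ) ^ 2)⁻¹) k.natAbs := by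
    refine Finset.sum_congr rfl fun k hk => ?_
    have h2 : (1 : ℝ) ≤ |(k : ℝ)| := by
      have hNr : (1 : ℝ) ≤ (N : ℝ) := by exact_mod_cast hN
      nlinarith [hs k hk]
    have hcast : (k.natAbs : ℝ) = |(k : ℝ)| := by rw [Nat.cast_natAbs, Int.cast_abs]
    have : wt k = (k.natAbs : ℝ) := by
      rw [wt_eq_natAbs, hcast]; exact max_eq_right h2
    rw [this]
  rw [h1]
  refine (sum_natAbs_le s (fun m : ℕ => ((m : ℝ) ^ 2)⁻¹) (fun m => by positivity)).trans ?_
  set t := s.image Int.natAbs with ht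
  have h3 : t ⊆ Finset.Ioo (2 * N) (t.sup id + 1) := by
    intro m hm
    rw [Finset.mem_Ioo]
    constructor
    · rcases Finset.mem_image.1 hm with ⟨k, hk, rfl⟩
      have hcast : (k.natAbs : ℝ) = |(k : ℝ)| := by rw [Nat.cast_natAbs, Int.cast_abs]
      have := hs k hk
      rw [← hcast] at this
      exact_mod_cast (by push_cast at this ⊢; exact this : ((2 * N : ℕ) : ℝ) < (k.natAbs : ℝ))
    · exact Nat.lt_succ_of_le (Finset.le_sup (f := id) hm)
  have h4 : ∑ m ∈ t, ((m : ℝ) ^ 2)⁻¹ ≤ ∑ m ∈ Finset.Ioo (2 * N) (t.sup id + 1), ((m : ℝ) ^ 2)⁻¹ :=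
    Finset.sum_le_sum_of_subset_of_nonneg h3 (fun m _ _ => by positivity)
  have h5 : ∑ m ∈ Finset.Ioo (2 * N) (t.sup id + 1), ((m : ℝ) ^ 2)⁻¹ ≤ 2 / ((2 * N : ℕ) + 1) :=
    sum_Ioo_inv_sq_le _ _
  have h6 : (2 : ℝ) / ((2 * N : ℕ) + 1) ≤ 1 / N := by
    rw [div_le_div_iff₀ (by positivity) (by exact_mod_cast Nat.lt_of_lt_of_le Nat.zero_lt_one hN)]
    push_cast
    nlinarith [hN]
  have hNr : (0:ℝ) < N := by exact_mod_cast Nat.lt_of_lt_of_le Nat.zero_lt_one hN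
  calc 2 * ∑ m ∈ t, ((m : ℝ) ^ 2)⁻¹ ≤ 2 * (1 / N) := by
        refine mul_le_mul_of_nonneg_left ((h4.trans h5).trans h6) (by norm_num)
    _ = 2 / N := by ring


lemma summable_shift (f : ℤ → ℝ) (n : ℤ) (hf : Summable f) :
    Summable (fun k : ℤ => f (n - k)) :=
  hf.comp_injective sub_right_injective

lemma summable_ker (n : ℤ) : Summable (fun k : ℤ => (wt k * wt (n - k))⁻¹) := by
  have h2 : Summable (fun k : ℤ => ((wt (n - k)) ^ 2)⁻¹) :=
    summable_shift (fun j : ℤ => ((wt j) ^ 2)⁻¹) n summable_inv_wt_sq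
  refine Summable.of_nonneg_of_le
    (fun k => inv_nonneg.2 (mul_nonneg (wt_pos k).le (wt_pos (n - k)).le)) (fun k => ?_)
    (summable_inv_wt_sq.add h2)
  have ha := one_le_wt k
  have hb := one_le_wt (n - k)
  rw [mul_inv, inv_eq_one_div (wt k), inv_eq_one_div (wt (n-k)), inv_eq_one_div ((wt k)^2),
    inv_eq_one_div ((wt (n-k))^2), div_add_div _ _ (by positivity) (by positivity),
    div_mul_div_comm, div_le_div_iff₀ (by positivity) (by positivity)]
  have hmn : 0 ≤ wt k * wt (n - k) := mul_nonneg (wt_pos k).le (wt_pos (n - k)).le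
  have hsq : 0 ≤ wt k ^ 2 + wt (n - k) ^ 2 - wt k * wt (n - k) := by
    nlinarith [sq_nonneg (wt k - wt (n - k))]
  nlinarith [mul_nonneg hsq hmn]

lemma kernel_bound (n : ℤ) :
    ∑' k : ℤ, (wt k * wt (n - k))⁻¹ ≤ 50 * Real.log (wt n + 1) / wt n := by
  classical
  apply Summable.tsum_le_of_sum_le (summable_ker n)
  intro s
  set N : ℝ := wt n with hNdef
  have hN1 : 1 ≤ N := one_le_wt n
  have hNpos : 0 < N := wt_pos n
  -- natural number version of N
  set Nn : ℕ := (max 1 |n|).toNat with hNn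
  have hNncast : (Nn : ℝ) = N := by
    have h : ((Nn : ℤ) : ℝ) = ((1 ⊔ |n| : ℤ) : ℝ) := by
      rw [hNn, Int.toNat_of_nonneg (le_trans zero_le_one (le_max_left _ _))]
    rw [hNdef]
    unfold wt
    rw [← h]
    norm_cast
  have hNn1 : 1 ≤ Nn := by
    have : (1:ℝ) ≤ (Nn:ℝ) := by rw [hNncast]; exact hN1
    exact_mod_cast this
  set s₁ := s.filter (fun k : ℤ => |(k : ℝ)| ≤ 2 * N) with hs₁
  set s₂ := s.filter (fun k : ℤ => ¬ |(k : ℝ)| ≤ 2 * N) with hs₂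
  have hsplit : ∑ k ∈ s, (wt k * wt (n - k))⁻¹
      = ∑ k ∈ s₁, (wt k * wt (n - k))⁻¹ + ∑ k ∈ s₂, (wt k * wt (n - k))⁻¹ :=
    (Finset.sum_filter_add_sum_filter_not s _ _).symm
  -- bound on s₁
  have hb1 : ∑ k ∈ s₁, (wt k * wt (n - k))⁻¹
      ≤ N⁻¹ * ((4 + 2 * Real.log (2 * N)) + (4 + 2 * Real.log (3 * N))) := by
    have step : ∀ k ∈ s₁, (wt k * wt (n - k))⁻¹ ≤ N⁻¹ * ((wt k)⁻¹ + (wt (n - k))⁻¹) := by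
      intro k _
      have ha := one_le_wt k
      have hb := one_le_wt (n - k)
      have hab := wt_le_add n k
      have heq : N⁻¹ * ((wt k)⁻¹ + (wt (n - k))⁻¹)
          = (wt k + wt (n - k)) / (N * (wt k * wt (n - k))) := by
        field_simp
        ring
      have habN : N ≤ wt k + wt (n - k) := hab
      rw [heq, inv_eq_one_div, div_le_div_iff₀ (by positivity) (by positivity)]
      nlinarith [mul_nonneg (sub_nonneg.2 habN) (mul_pos (wt_pos k) (wt_pos (n - k))).le]
    calc ∑ k ∈ s₁, (wt k * wt (n - k))⁻¹
        ≤ ∑ k ∈ s₁, N⁻¹ * ((wt k)⁻¹ + (wt (n - k))⁻¹) := Finset.sum_le_sum step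
      _ = N⁻¹ * (∑ k ∈ s₁, (wt k)⁻¹ + ∑ k ∈ s₁, (wt (n - k))⁻¹) := by
          rw [← Finset.mul_sum, Finset.sum_add_distrib]
      _ ≤ N⁻¹ * ((4 + 2 * Real.log (2 * N)) + (4 + 2 * Real.log (3 * N))) := by
          apply mul_le_mul_of_nonneg_left _ (by positivity)
          apply add_le_add
          · exact sum_inv_wt_le (by linarith) s₁ (fun k hk => (Finset.mem_filter.1 hk).2)
          · have himg : ∑ k ∈ s₁, (wt (n - k))⁻¹
                = ∑ j ∈ s₁.image (fun k => n - k), (wt j)⁻¹ := by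
              rw [Finset.sum_image (fun x _ y _ h => by omega)]
            rw [himg]
            apply sum_inv_wt_le (by linarith) _
            intro j hj
            rcases Finset.mem_image.1 hj with ⟨k, hk, rfl⟩
            have hk2 : |(k : ℝ)| ≤ 2 * N := (Finset.mem_filter.1 hk).2
            have hnN : |(n : ℝ)| ≤ N := abs_le_wt n
            calc |((n - k : ℤ) : ℝ)| = |(n : ℝ) - (k : ℝ)| := by push_cast; rfl
              _ ≤ |(n : ℝ)| + |(k : ℝ)| := abs_sub _ _
              _ ≤ 3 * N := by linarith
  -- bound on s₂
  have hb2 : ∑ k ∈ s₂, (wt k * wt (n - k))⁻¹ ≤ 4 / N := by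
    have step : ∀ k ∈ s₂, (wt k * wt (n - k))⁻¹ ≤ 2 * ((wt k) ^ 2)⁻¹ := by
      intro k hk
      have h2N : 2 * N < |(k : ℝ)| := not_le.1 (Finset.mem_filter.1 hk).2
      have ha : wt k = |(k : ℝ)| := by
        rw [wt_eq]; exact max_eq_right (by linarith)
      have hnN : |(n : ℝ)| ≤ N := abs_le_wt n
      have habs : |(k : ℝ)| - |(n : ℝ)| ≤ |((n - k : ℤ) : ℝ)| := by
        have : |(k : ℝ)| - |(n : ℝ)| ≤ |(k : ℝ) - (n : ℝ)| := abs_sub_abs_le_abs_sub _ _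
        calc |(k : ℝ)| - |(n : ℝ)| ≤ |(k : ℝ) - (n : ℝ)| := this
          _ = |((n - k : ℤ) : ℝ)| := by push_cast; rw [abs_sub_comm]
      have hwnk : wt k ≤ 2 * wt (n - k) := by
        have h4 := abs_le_wt (n - k)
        rw [ha]
        nlinarith
      have hlow : (wt k) ^ 2 / 2 ≤ wt k * wt (n - k) := by nlinarith [wt_pos k, wt_pos (n-k)]
      calc (wt k * wt (n - k))⁻¹ ≤ ((wt k) ^ 2 / 2)⁻¹ :=
            inv_anti₀ (div_pos (pow_pos (wt_pos k) 2) two_pos) hlow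
        _ = 2 * ((wt k) ^ 2)⁻¹ := by rw [inv_div]; ring
    calc ∑ k ∈ s₂, (wt k * wt (n - k))⁻¹ ≤ ∑ k ∈ s₂, 2 * ((wt k) ^ 2)⁻¹ :=
          Finset.sum_le_sum step
      _ = 2 * ∑ k ∈ s₂, ((wt k) ^ 2)⁻¹ := (Finset.mul_sum _ _ _).symm
      _ ≤ 2 * (2 / Nn) := by
          apply mul_le_mul_of_nonneg_left _ (by norm_num)
          apply sum_inv_wt_sq_tail hNn1
          intro k hk
          have := not_le.1 (Finset.mem_filter.1 hk).2
          rw [hNncast]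
          exact this
      _ = 4 / N := by rw [hNncast]; ring
  -- numeric conclusion
  have hlog2 : (0.6931 : ℝ) ≤ Real.log (N + 1) := by
    have h2 : Real.log 2 ≤ Real.log (N + 1) :=
      Real.log_le_log (by norm_num) (by linarith)
    linarith [Real.log_two_gt_d9]
  have hlogN : Real.log N ≤ Real.log (N + 1) := Real.log_le_log hNpos (by linarith)
  have hlogN0 : 0 ≤ Real.log N := Real.log_nonneg hN1
  have hlog2N : Real.log (2 * N) = Real.log 2 + Real.log N :=
    Real.log_mul (by norm_num) (by positivity)
  have hlog3N : Real.log (3 * N) = Real.log 3 + Real.log N :=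
    Real.log_mul (by norm_num) (by positivity)
  have hl2 : Real.log 2 ≤ 1 := by
    have := Real.log_le_sub_one_of_pos (by norm_num : (0:ℝ) < 2); linarith
  have hl3 : Real.log 3 ≤ 2 := by
    have := Real.log_le_sub_one_of_pos (by norm_num : (0:ℝ) < 3); linarith
  rw [hsplit]
  have hfinal : (4 + 2 * Real.log (2 * N)) + (4 + 2 * Real.log (3 * N)) + 4
      ≤ 50 * Real.log (N + 1) := by
    rw [hlog2N, hlog3N]
    nlinarith
  calc ∑ k ∈ s₁, (wt k * wt (n - k))⁻¹ + ∑ k ∈ s₂, (wt k * wt (n - k))⁻¹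
      ≤ N⁻¹ * ((4 + 2 * Real.log (2 * N)) + (4 + 2 * Real.log (3 * N))) + 4 / N := by
        linarith
    _ = ((4 + 2 * Real.log (2 * N)) + (4 + 2 * Real.log (3 * N)) + 4) / N := by
        field_simp
    _ ≤ 50 * Real.log (N + 1) / N := by gcongr


lemma tsum_mul_le_sqrt {f g : ℤ → ℝ} (hf0 : ∀ k, 0 ≤ f k) (hg0 : ∀ k, 0 ≤ g k)
    (hf : Summable (fun k => f k ^ 2)) (hg : Summable (fun k => g k ^ 2)) :
    ∑' k, f k * g k ≤ Real.sqrt (∑' k, f k ^ 2) * Real.sqrt (∑' k, g k ^ 2) := by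
  have hfg : Summable (fun k => f k * g k) := by
    refine Summable.of_nonneg_of_le (fun k => mul_nonneg (hf0 k) (hg0 k)) (fun k => ?_)
      (hf.add hg)
    nlinarith [sq_nonneg (f k - g k)]
  apply Summable.tsum_le_of_sum_le hfg
  intro s
  have h1 := Finset.sum_mul_sq_le_sq_mul_sq s f g
  have h2 : ∑ i ∈ s, f i ^ 2 ≤ ∑' i, f i ^ 2 := Summable.sum_le_tsum s (fun i _ => sq_nonneg _) hf
  have h3 : ∑ i ∈ s, g i ^ 2 ≤ ∑' i, g i ^ 2 := Summable.sum_le_tsum s (fun i _ => sq_nonneg _) hg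
  have hnn : 0 ≤ ∑ i ∈ s, f i * g i :=
    Finset.sum_nonneg fun i _ => mul_nonneg (hf0 i) (hg0 i)
  calc ∑ i ∈ s, f i * g i = Real.sqrt ((∑ i ∈ s, f i * g i) ^ 2) := (Real.sqrt_sq hnn).symm
    _ ≤ Real.sqrt ((∑' i, f i ^ 2) * (∑' i, g i ^ 2)) := by
        apply Real.sqrt_le_sqrt
        refine h1.trans (mul_le_mul h2 h3 (Finset.sum_nonneg fun i _ => sq_nonneg _)
          (tsum_nonneg fun i => sq_nonneg _))
    _ = Real.sqrt (∑' i, f i ^ 2) * Real.sqrt (∑' i, g i ^ 2) :=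
        Real.sqrt_mul (tsum_nonneg fun i => sq_nonneg _) _

/-- The product of two `H^{1/2}` functions lies in `H^{1/2,1/√log}`, with a bilinear bound,
expressed via Fourier coefficients. -/
theorem stmt_13 : ∃ C > (0 : ℝ), ∀ u v : ℤ → ℂ,
    Summable (fun n : ℤ => wt n * ‖u n‖ ^ 2) →
    Summable (fun n : ℤ => wt n * ‖v n‖ ^ 2) →
    Summable (fun n : ℤ => (wt n / Real.log (wt n + 1)) * ‖conv u v n‖ ^ 2) ∧
    ∑' n : ℤ, (wt n / Real.log (wt n + 1)) * ‖conv u v n‖ ^ 2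
      ≤ C ^ 2 * (∑' n : ℤ, wt n * ‖u n‖ ^ 2) * (∑' n : ℤ, wt n * ‖v n‖ ^ 2) := by
  refine ⟨8, by norm_num, ?_⟩
  intro u v hu hv
  set a : ℤ → ℝ := fun k => wt k * ‖u k‖ ^ 2 with ha
  set b : ℤ → ℝ := fun k => wt k * ‖v k‖ ^ 2 with hb
  have ha0 : ∀ k, 0 ≤ a k := fun k => mul_nonneg (wt_pos k).le (sq_nonneg _)
  have hb0 : ∀ k, 0 ≤ b k := fun k => mul_nonneg (wt_pos k).le (sq_nonneg _)
  have hA0 : 0 ≤ ∑' k, a k := tsum_nonneg ha0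
  have hB0 : 0 ≤ ∑' k, b k := tsum_nonneg hb0
  -- double summability via reindexing
  have hab : Summable (fun p : ℤ × ℤ => a p.1 * b p.2) := hu.mul_of_nonneg hv ha0 hb0
  let e : ℤ × ℤ ≃ ℤ × ℤ :=
    ⟨fun p => (p.2, p.1 - p.2), fun q => (q.1 + q.2, q.1),
      fun p => by simp, fun q => by simp⟩
  have hT : Summable (fun p : ℤ × ℤ => a p.2 * b (p.1 - p.2)) := by
    have h := (e.summable_iff (f := fun p : ℤ × ℤ => a p.1 * b p.2)).2 hab
    exact h
  obtain ⟨hT1, hT2⟩ := (summable_prod_of_nonneg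
    (fun p => mul_nonneg (ha0 p.2) (hb0 (p.1 - p.2)))).1 hT
  -- hT1 : ∀ n, Summable fun k => a k * b (n - k);  hT2 : Summable fun n => ∑' k, a k * b (n-k)
  set T : ℤ → ℝ := fun n => ∑' k, a k * b (n - k) with hTdef
  have hTn0 : ∀ n, 0 ≤ T n := fun n => tsum_nonneg fun k => mul_nonneg (ha0 k) (hb0 _)
  have hTsum_eq : ∑' n, T n = (∑' k, a k) * (∑' k, b k) := by
    rw [← Summable.tsum_prod' hT (fun n => hT1 n)]
    have he : ∑' (p : ℤ × ℤ), a p.2 * b (p.1 - p.2) = ∑' (p : ℤ × ℤ), a p.1 * b p.2 :=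
      Equiv.tsum_eq e (fun p : ℤ × ℤ => a p.1 * b p.2)
    rw [he, Summable.tsum_prod' hab (fun x => (hv.mul_left _).congr fun k => rfl)]
    calc ∑' (i : ℤ) (j : ℤ), a i * b j = ∑' i, a i * ∑' j, b j :=
          tsum_congr fun i => tsum_mul_left
      _ = (∑' k, a k) * (∑' k, b k) := tsum_mul_right
  -- pointwise key bound
  have key : ∀ n, (wt n / Real.log (wt n + 1)) * ‖conv u v n‖ ^ 2 ≤ 50 * T n := by
    intro n
    set K : ℝ := ∑' k : ℤ, (wt k * wt (n - k))⁻¹ with hK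
    have hK0 : 0 ≤ K := tsum_nonneg fun k =>
      inv_nonneg.2 (mul_pos (wt_pos k) (wt_pos (n - k))).le
    have hL : 0 < Real.log (wt n + 1) := Real.log_pos (by linarith [one_le_wt n])
    have hu2 : Summable (fun k => ‖u k‖ ^ 2) :=
      Summable.of_nonneg_of_le (fun k => sq_nonneg _)
        (fun k => le_mul_of_one_le_left (sq_nonneg _) (one_le_wt k)) hu
    have hv2 : Summable (fun k => ‖v k‖ ^ 2) :=
      Summable.of_nonneg_of_le (fun k => sq_nonneg _)
        (fun k => le_mul_of_one_le_left (sq_nonneg _) (one_le_wt k)) hv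
    have hv2s : Summable (fun k : ℤ => ‖v (n - k)‖ ^ 2) :=
      summable_shift (fun j : ℤ => ‖v j‖ ^ 2) n hv2
    have hsum_norm : Summable (fun k : ℤ => ‖u k * v (n - k)‖) := by
      refine Summable.of_nonneg_of_le (fun k => norm_nonneg _) (fun k => ?_) (hu2.add hv2s)
      rw [norm_mul]
      nlinarith [sq_nonneg (‖u k‖ - ‖v (n - k)‖), norm_nonneg (u k), norm_nonneg (v (n - k)),
        mul_nonneg (norm_nonneg (u k)) (norm_nonneg (v (n - k)))]
    have h1 : ‖conv u v n‖ ≤ ∑' k, ‖u k‖ * ‖v (n - k)‖ :=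
      (norm_tsum_le_tsum_norm hsum_norm).trans_eq (tsum_congr fun k => norm_mul _ _)
    -- Cauchy-Schwarz
    set f : ℤ → ℝ := fun k => (Real.sqrt (wt k * wt (n - k)))⁻¹ with hf
    set g : ℤ → ℝ := fun k => Real.sqrt (wt k * wt (n - k)) * (‖u k‖ * ‖v (n - k)‖) with hg
    have hwk : ∀ k : ℤ, 0 < wt k * wt (n - k) := fun k => mul_pos (wt_pos k) (wt_pos (n - k))
    have hf0 : ∀ k, 0 ≤ f k := fun k => inv_nonneg.2 (Real.sqrt_nonneg _)
    have hg0 : ∀ k, 0 ≤ g k := fun k =>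
      mul_nonneg (Real.sqrt_nonneg _) (mul_nonneg (norm_nonneg _) (norm_nonneg _))
    have hfg : ∀ k, f k * g k = ‖u k‖ * ‖v (n - k)‖ := by
      intro k
      have hne : Real.sqrt (wt k * wt (n - k)) ≠ 0 := (Real.sqrt_pos.2 (hwk k)).ne'
      rw [hf, hg, ← mul_assoc, inv_mul_cancel₀ hne, one_mul]
    have hf2 : ∀ k, f k ^ 2 = (wt k * wt (n - k))⁻¹ := by
      intro k
      rw [hf, inv_pow, Real.sq_sqrt (hwk k).le]
    have hg2 : ∀ k, g k ^ 2 = a k * b (n - k) := by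
      intro k
      rw [hg, mul_pow, Real.sq_sqrt (hwk k).le, ha, hb, mul_pow]
      ring
    have hfS : Summable (fun k => f k ^ 2) := (summable_ker n).congr fun k => (hf2 k).symm
    have hgS : Summable (fun k => g k ^ 2) := (hT1 n).congr fun k => (hg2 k).symm
    have hCS := tsum_mul_le_sqrt hf0 hg0 hfS hgS
    rw [tsum_congr hfg, tsum_congr hf2, tsum_congr hg2] at hCS
    have h4 : ‖conv u v n‖ ≤ Real.sqrt K * Real.sqrt (T n) := h1.trans hCS
    have hconv2 : ‖conv u v n‖ ^ 2 ≤ K * T n := by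
      have h5 : ‖conv u v n‖ ^ 2 ≤ (Real.sqrt K * Real.sqrt (T n)) ^ 2 :=
        pow_le_pow_left₀ (norm_nonneg _) h4 2
      rwa [mul_pow, Real.sq_sqrt hK0, Real.sq_sqrt (hTn0 n)] at h5
    have hkb : K ≤ 50 * Real.log (wt n + 1) / wt n := kernel_bound n
    calc (wt n / Real.log (wt n + 1)) * ‖conv u v n‖ ^ 2
        ≤ (wt n / Real.log (wt n + 1)) * (K * T n) :=
          mul_le_mul_of_nonneg_left hconv2 (div_nonneg (wt_pos n).le hL.le)
      _ ≤ (wt n / Real.log (wt n + 1)) * ((50 * Real.log (wt n + 1) / wt n) * T n) :=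
          mul_le_mul_of_nonneg_left (mul_le_mul_of_nonneg_right hkb (hTn0 n))
            (div_nonneg (wt_pos n).le hL.le)
      _ = 50 * T n := by
          field_simp
          rw [div_eq_iff (wt_pos n).ne']
          ring
  have hkey_sum : Summable (fun n : ℤ => (wt n / Real.log (wt n + 1)) * ‖conv u v n‖ ^ 2) := by
    refine Summable.of_nonneg_of_le (fun n => ?_) key (hT2.mul_left 50)
    exact mul_nonneg (div_nonneg (wt_pos n).le (Real.log_nonneg (by linarith [one_le_wt n])))
      (sq_nonneg _)
  refine ⟨hkey_sum, ?_⟩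
  calc ∑' n : ℤ, (wt n / Real.log (wt n + 1)) * ‖conv u v n‖ ^ 2
      ≤ ∑' n, 50 * T n := Summable.tsum_le_tsum key hkey_sum (hT2.mul_left 50)
    _ = 50 * ((∑' k, a k) * (∑' k, b k)) := by rw [tsum_mul_left, hTsum_eq]
    _ ≤ 8 ^ 2 * (∑' k, a k) * (∑' k, b k) := by nlinarith [mul_nonneg hA0 hB0]
end

section
/- There exists a constant K₀ > 0 such that for any u ∈ H^{-1/2,√log}(𝕋,ℂ) and v ∈ H^{1/2}(𝕋,ℂ), the product uv lies in H^{-1/2}(𝕋,ℂ) and ‖uv‖_{-1/2} ≤ K₀ ‖u‖_{-1/2,√log} ‖v‖_{1/2}. -/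
lemma wt_neg (n : ℤ) : wt (-n) = wt n := by unfold wt; rw [abs_neg]

lemma wt_add_le (a b : ℤ) : wt (a + b) ≤ wt a + wt b := by
  unfold wt
  have h : max 1 |a + b| ≤ max 1 |a| + max 1 |b| := by
    have := abs_add_le a b
    have h1 : (1:ℤ) ≤ max 1 |a| := le_max_left _ _
    have h2 : (0:ℤ) ≤ max 1 |b| := le_trans zero_le_one (le_max_left _ _)
    have h3 : |a| ≤ max 1 |a| := le_max_right _ _
    have h4 : |b| ≤ max 1 |b| := le_max_right _ _
    omega
  exact_mod_cast h

lemma wt_le_two_mul (a b : ℤ) : wt (a + b) ≤ 2 * wt a * wt b := by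
  have h := wt_add_le a b
  have h1 := one_le_wt a
  have h2 := one_le_wt b
  nlinarith

lemma log_two_le_log_wt (n : ℤ) : Real.log 2 ≤ Real.log (wt n + 1) := by
  apply Real.log_le_log (by norm_num)
  have := one_le_wt n; linarith

lemma log_wt_pos (n : ℤ) : 0 < Real.log (wt n + 1) :=
  lt_of_lt_of_le (Real.log_pos (by norm_num)) (log_two_le_log_wt n)

lemma tail_shifted (M : ℕ) (hM : 1 ≤ M) :
    Summable (fun j : ℕ => (((j + M + 1 : ℕ) : ℝ) ^ 2)⁻¹) ∧
    ∑' j : ℕ, (((j + M + 1 : ℕ) : ℝ) ^ 2)⁻¹ ≤ ((M : ℝ))⁻¹ := by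
  have key : ∀ j : ℕ, (((j + M + 1 : ℕ) : ℝ) ^ 2)⁻¹
      ≤ (((j + M : ℕ) : ℝ))⁻¹ - (((j + 1 + M : ℕ) : ℝ))⁻¹ := by
    intro j
    have h1 : (0:ℝ) < ((j + M : ℕ) : ℝ) := by
      have : 0 < j + M := by omega
      exact_mod_cast this
    have h2 : (0:ℝ) < ((j + M + 1 : ℕ) : ℝ) := by positivity
    have h3 : ((j + 1 + M : ℕ) : ℝ) = ((j + M : ℕ) : ℝ) + 1 := by push_cast; ring
    have h4 : ((j + M + 1 : ℕ) : ℝ) = ((j + M : ℕ) : ℝ) + 1 := by push_cast; ring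
    rw [h3, h4]
    set x : ℝ := ((j + M : ℕ) : ℝ)
    rw [inv_sub_inv (ne_of_gt h1) (by positivity), show x + 1 - x = 1 by ring]
    rw [one_div, inv_le_inv₀ (by positivity) (by positivity)]
    nlinarith
  have hpart : ∀ n : ℕ, ∑ j ∈ Finset.range n, (((j + M + 1 : ℕ) : ℝ) ^ 2)⁻¹ ≤ ((M : ℝ))⁻¹ := by
    intro n
    have htel : ∑ j ∈ Finset.range n, ((((j + M : ℕ) : ℝ))⁻¹ - (((j + 1 + M : ℕ) : ℝ))⁻¹)
        = (((0 + M : ℕ) : ℝ))⁻¹ - (((n + M : ℕ) : ℝ))⁻¹ := by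
      exact Finset.sum_range_sub' (fun j => (((j + M : ℕ) : ℝ))⁻¹) n
    calc ∑ j ∈ Finset.range n, (((j + M + 1 : ℕ) : ℝ) ^ 2)⁻¹
        ≤ ∑ j ∈ Finset.range n, ((((j + M : ℕ) : ℝ))⁻¹ - (((j + 1 + M : ℕ) : ℝ))⁻¹) :=
          Finset.sum_le_sum (fun j _ => key j)
      _ = (((0 + M : ℕ) : ℝ))⁻¹ - (((n + M : ℕ) : ℝ))⁻¹ := htel
      _ ≤ ((M : ℝ))⁻¹ := by
          have : (0:ℝ) ≤ (((n + M : ℕ) : ℝ))⁻¹ := by positivity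
          simp only [Nat.zero_add]; linarith
  exact ⟨summable_of_sum_range_le (fun j => by positivity) hpart,
    Real.tsum_le_of_sum_range_le (fun j => by positivity) hpart⟩

lemma int_tail (M : ℕ) (hM : 1 ≤ M) :
    Summable (fun m : ℤ => if (M : ℤ) < |m| then ((wt m) ^ 2)⁻¹ else 0) ∧
    ∑' m : ℤ, (if (M : ℤ) < |m| then ((wt m) ^ 2)⁻¹ else 0) ≤ 2 * ((M : ℝ))⁻¹ := by
  set f : ℤ → ℝ := fun m => if (M : ℤ) < |m| then ((wt m) ^ 2)⁻¹ else 0 with hf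
  -- the positive part as a function of ℕ
  have hwt_nat : ∀ n : ℕ, 1 ≤ n → wt (n : ℤ) = (n : ℝ) := by
    intro n hn
    unfold wt
    have : max 1 |(n:ℤ)| = (n:ℤ) := by
      rw [abs_of_nonneg (by positivity)]
      omega
    rw [this]; norm_num
  have hFnat : ∀ n : ℕ, f (n : ℤ) = (if M < n then (((n:ℕ) : ℝ) ^ 2)⁻¹ else 0) := by
    intro n
    by_cases h : M < n
    · have h1 : (M : ℤ) < |(n:ℤ)| := by
        rw [abs_of_nonneg (by positivity)]; exact_mod_cast h
      simp only [hf, if_pos h1, if_pos h, hwt_nat n (by omega)]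
    · have h1 : ¬ ((M : ℤ) < |(n:ℤ)|) := by
        rw [abs_of_nonneg (by positivity)]
        exact_mod_cast h
      simp only [hf, if_neg h1, if_neg h]
  have hFneg : ∀ n : ℕ, f (-((n:ℤ) + 1)) = (if M < n + 1 then (((n + 1 :ℕ) : ℝ) ^ 2)⁻¹ else 0) := by
    intro n
    have habs : |(-((n:ℤ) + 1))| = (n:ℤ) + 1 := by
      rw [abs_neg, abs_of_nonneg (by positivity)]
    have hw : wt (-((n:ℤ) + 1)) = ((n+1 : ℕ) : ℝ) := by
      rw [show (-((n:ℤ)+1)) = -(((n+1:ℕ):ℤ)) by push_cast; ring, wt_neg, hwt_nat _ (by omega)]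
    by_cases h : M < n + 1
    · have h1 : (M:ℤ) < |(-((n:ℤ) + 1))| := by rw [habs]; exact_mod_cast h
      simp only [hf, if_pos h1, if_pos h, hw]
    · have h1 : ¬ ((M:ℤ) < |(-((n:ℤ) + 1))|) := by rw [habs]; exact_mod_cast h
      simp only [hf, if_neg h1, if_neg h]
  -- summability/tsum of F : ℕ → ℝ
  set F : ℕ → ℝ := fun n => if M < n then ((n : ℝ) ^ 2)⁻¹ else 0 with hFdef
  have hF0 : ∀ n, 0 ≤ F n := fun n => by
    simp only [hFdef]; split <;> positivity
  obtain ⟨hJsum, hJle⟩ := tail_shifted M hM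
  have hshift : ∀ j : ℕ, F (j + (M + 1)) = (((j + M + 1 : ℕ) : ℝ) ^ 2)⁻¹ := by
    intro j
    simp only [hFdef, if_pos (by omega : M < j + (M+1))]
    norm_num [show j + (M+1) = j + M + 1 by ring]
  have hFsum : Summable F := by
    apply (summable_nat_add_iff (M + 1)).mp
    exact hJsum.congr (fun j => (hshift j).symm)
  have hFtsum : ∑' n, F n ≤ ((M:ℝ))⁻¹ := by
    have := (Summable.sum_add_tsum_nat_add (M + 1) hFsum).symm
    have hz : ∑ i ∈ Finset.range (M + 1), F i = 0 := by
      apply Finset.sum_eq_zero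
      intro i hi
      simp only [Finset.mem_range] at hi
      simp only [hFdef, if_neg (by omega : ¬ M < i)]
    rw [this, hz, zero_add, tsum_congr hshift]
    exact hJle
  -- F shifted by one (negative side)
  have hFsum1 : Summable (fun n : ℕ => F (n + 1)) := (summable_nat_add_iff 1).mpr hFsum
  have hFtsum1 : ∑' n : ℕ, F (n + 1) ≤ ((M:ℝ))⁻¹ := by
    have h := (Summable.sum_add_tsum_nat_add 1 hFsum)
    have hz : ∑ i ∈ Finset.range 1, F i = 0 := by
      simp [hFdef, show ¬ M < 0 by omega]
    rw [hz, zero_add] at h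
    rw [h]; exact hFtsum
  have hFneg' : ∀ n : ℕ, f (-((n:ℤ) + 1)) = F (n + 1) := by
    intro n; rw [hFneg n]
  have hsum : Summable f :=
    Summable.of_nat_of_neg_add_one (hFsum.congr fun n => (hFnat n).symm)
      (hFsum1.congr fun n => (hFneg' n).symm)
  refine ⟨hsum, ?_⟩
  rw [tsum_of_nat_of_neg_add_one (hFsum.congr fun n => (hFnat n).symm)
      (hFsum1.congr fun n => (hFneg' n).symm)]
  have e1 : ∑' n : ℕ, f (n : ℤ) = ∑' n, F n := tsum_congr hFnat
  have e2 : ∑' n : ℕ, f (-((n:ℤ) + 1)) = ∑' n : ℕ, F (n + 1) := tsum_congr hFneg'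
  rw [e1, e2]; linarith

lemma log_step (N : ℕ) (hN : 1 ≤ N) : ((N : ℝ) + 1)⁻¹ ≤ Real.log (N + 1) - Real.log N := by
  have hN0 : (0:ℝ) < N := by exact_mod_cast hN
  have h := Real.log_le_sub_one_of_pos (show (0:ℝ) < (N:ℝ)/(N+1) by positivity)
  rw [Real.log_div (ne_of_gt hN0) (by positivity)] at h
  have : (N:ℝ)/(N+1) - 1 = -((N:ℝ)+1)⁻¹ := by field_simp; ring
  rw [this] at h
  linarith

lemma wt_coe_nat (n : ℕ) (hn : 1 ≤ n) : wt (n : ℤ) = (n : ℝ) := by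
  unfold wt
  have : max 1 |(n:ℤ)| = (n:ℤ) := by rw [abs_of_nonneg (by positivity)]; omega
  rw [this]; norm_num

lemma harmonic_Icc : ∀ N : ℕ, 1 ≤ N →
    ∑ m ∈ Finset.Icc (-(N:ℤ)) (N:ℤ), (wt m)⁻¹ ≤ 3 + 2 * Real.log N := by
  intro N
  induction N with
  | zero => omega
  | succ N ih =>
    intro _
    by_cases hN : 1 ≤ N
    · have hrec := ih hN
      have hsplit : Finset.Icc (-(N+1:ℕ):ℤ) ((N+1:ℕ):ℤ)
          = insert (-(N+1:ℕ):ℤ) (insert ((N+1:ℕ):ℤ) (Finset.Icc (-(N:ℕ):ℤ) ((N:ℕ):ℤ))) := by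
        ext x
        simp only [Finset.mem_Icc, Finset.mem_insert]
        push_cast
        omega
      have hn1 : (-(N+1:ℕ):ℤ) ∉ insert ((N+1:ℕ):ℤ) (Finset.Icc (-(N:ℕ):ℤ) ((N:ℕ):ℤ)) := by
        simp only [Finset.mem_insert, Finset.mem_Icc]
        push_cast; omega
      have hn2 : ((N+1:ℕ):ℤ) ∉ Finset.Icc (-(N:ℕ):ℤ) ((N:ℕ):ℤ) := by
        simp only [Finset.mem_Icc]; push_cast; omega
      rw [hsplit, Finset.sum_insert hn1, Finset.sum_insert hn2]
      have hw1 : wt (-(N+1:ℕ):ℤ) = ((N:ℝ) + 1) := by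
        rw [show (-(N+1:ℕ):ℤ) = -(((N+1:ℕ)):ℤ) by push_cast; ring, wt_neg,
          wt_coe_nat (N+1) (by omega)]
        push_cast; ring
      have hw2 : wt ((N+1:ℕ):ℤ) = ((N:ℝ) + 1) := by
        rw [wt_coe_nat (N+1) (by omega)]; push_cast; ring
      rw [hw1, hw2]
      have hls := log_step N hN
      have : Real.log ((N:ℕ):ℝ) ≤ Real.log (((N+1:ℕ)):ℝ) - ((N:ℝ)+1)⁻¹ := by
        push_cast
        push_cast at hls
        linarith
      push_cast
      push_cast at hrec
      linarith
    · have hN0 : N = 0 := by omega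
      subst hN0
      have : Finset.Icc (-(1:ℤ)) (1:ℤ) = {-1, 0, 1} := by decide
      norm_num [this, Finset.sum_insert, wt]

lemma key_lemma (k : ℤ) :
    Summable (fun m : ℤ => (wt m * wt (k + m))⁻¹) ∧
    ∑' m : ℤ, (wt m * wt (k + m))⁻¹ ≤ 100 * (Real.log (wt k + 1) / wt k) := by
  set Kn : ℕ := (max 1 |k|).toNat with hKn
  have hKnz : ((Kn : ℤ)) = max 1 |k| := Int.toNat_of_nonneg (by omega)
  have hK1 : 1 ≤ Kn := by omega
  have hwtk : wt k = (Kn : ℝ) := by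
    unfold wt; rw [← hKnz]; norm_num
  have hKpos : (0:ℝ) < (Kn:ℝ) := by exact_mod_cast hK1
  have habs_k : |k| ≤ (Kn:ℤ) := by omega
  set f : ℤ → ℝ := fun m => (wt m * wt (k + m))⁻¹ with hfdef
  set F₁ : ℤ → ℝ := fun m =>
    if |m| ≤ ((2*Kn:ℕ) : ℤ) then (wt k)⁻¹ * ((wt m)⁻¹ + (wt (k+m))⁻¹) else 0 with hF1
  set F₂ : ℤ → ℝ := fun m => (if ((2*Kn:ℕ) : ℤ) < |m| then ((wt m) ^ 2)⁻¹ else 0) * 2 with hF2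
  have hf0 : ∀ m, 0 ≤ f m := fun m => by
    have := wt_pos m; have := wt_pos (k+m); positivity
  -- pointwise bound
  have hle : ∀ m, f m ≤ F₁ m + F₂ m := by
    intro m
    have h1 := wt_pos m
    have h2 := wt_pos (k + m)
    have h3 := wt_pos k
    by_cases hc : |m| ≤ ((2*Kn:ℕ) : ℤ)
    · have htri : wt k ≤ wt m + wt (k + m) := by
        calc wt k = wt ((k + m) + (-m)) := by norm_num
        _ ≤ wt (k+m) + wt (-m) := wt_add_le _ _
        _ = wt m + wt (k+m) := by rw [wt_neg]; ring
      have hb : f m ≤ (wt k)⁻¹ * ((wt m)⁻¹ + (wt (k+m))⁻¹) := by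
        simp only [hfdef]
        have e : (wt k)⁻¹ * ((wt m)⁻¹ + (wt (k+m))⁻¹)
            = (wt m + wt (k+m)) / (wt k * (wt m * wt (k+m))) := by field_simp; ring
        rw [e, inv_eq_one_div, div_le_div_iff₀ (by positivity) (by positivity)]
        nlinarith [mul_le_mul_of_nonneg_right htri (mul_pos h1 h2).le]
      simp only [hF1, hF2, if_pos hc, if_neg (not_lt.mpr hc)]
      simpa using hb
    · push_neg at hc
      have hwm : ((2*Kn:ℕ):ℝ) < wt m := by
        have : ((2*Kn:ℕ):ℤ) < max 1 |m| := by omega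
        unfold wt; exact_mod_cast this
      have hhalf : wt m / 2 ≤ wt (k + m) := by
        have htri : wt m ≤ wt (k + m) + wt k := by
          calc wt m = wt ((k + m) + (-k)) := by norm_num
          _ ≤ wt (k+m) + wt (-k) := wt_add_le _ _
          _ = wt (k+m) + wt k := by rw [wt_neg]
        have : wt k ≤ wt m / 2 := by
          rw [hwtk]
          push_cast at hwm ⊢
          linarith
        linarith
      have hb : f m ≤ ((wt m)^2)⁻¹ * 2 := by
        simp only [hfdef]
        have e : ((wt m)^2)⁻¹ * 2 = 1 / (wt m * (wt m / 2)) := by field_simp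
        rw [e, inv_eq_one_div, div_le_div_iff₀ (by positivity) (by positivity)]
        nlinarith
      simp only [hF1, hF2, if_neg (not_le.mpr hc), if_pos hc]
      simpa using hb
  -- summability of the two majorants
  have hF1sum : Summable F₁ := by
    apply summable_of_ne_finset_zero (s := Finset.Icc (-((2*Kn:ℕ):ℤ)) ((2*Kn:ℕ):ℤ))
    intro m hm
    simp only [Finset.mem_Icc] at hm
    simp only [hF1, if_neg (show ¬ |m| ≤ ((2*Kn:ℕ):ℤ) by rw [abs_le]; omega)]
  obtain ⟨htail_sum, htail_le⟩ := int_tail (2*Kn) (by omega)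
  have hF2sum : Summable F₂ := htail_sum.mul_right 2
  have hF2le : ∑' m, F₂ m ≤ 2 * ((Kn:ℝ))⁻¹ := by
    rw [hF2, tsum_mul_right]
    have : (2:ℝ) * (((2*Kn:ℕ):ℝ))⁻¹ = ((Kn:ℝ))⁻¹ := by
      push_cast; field_simp
    calc (∑' m : ℤ, if ((2*Kn:ℕ) : ℤ) < |m| then ((wt m) ^ 2)⁻¹ else 0) * 2
        ≤ (2 * (((2*Kn:ℕ):ℝ))⁻¹) * 2 := by
          apply mul_le_mul_of_nonneg_right htail_le (by norm_num)
      _ = 2 * ((Kn:ℝ))⁻¹ := by rw [this]; ring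
  -- tsum of F₁
  have hlog2 : Real.log 2 ≤ 1 := by
    nlinarith [Real.log_le_sub_one_of_pos (show (0:ℝ) < 2 by norm_num)]
  have hlog3 : Real.log 3 ≤ 2 := by
    nlinarith [Real.log_le_sub_one_of_pos (show (0:ℝ) < 3 by norm_num)]
  have hlogKn : (0:ℝ) ≤ Real.log Kn := Real.log_nonneg (by exact_mod_cast hK1)
  have hF1le : ∑' m, F₁ m ≤ (wt k)⁻¹ * (12 + 4 * Real.log Kn) := by
    rw [tsum_eq_sum (s := Finset.Icc (-((2*Kn:ℕ):ℤ)) ((2*Kn:ℕ):ℤ))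
      (fun m hm => by
        simp only [Finset.mem_Icc] at hm
        simp only [hF1, if_neg (show ¬ |m| ≤ ((2*Kn:ℕ):ℤ) by rw [abs_le]; omega)])]
    have hcong : ∑ m ∈ Finset.Icc (-((2*Kn:ℕ):ℤ)) ((2*Kn:ℕ):ℤ), F₁ m
        = (wt k)⁻¹ * ((∑ m ∈ Finset.Icc (-((2*Kn:ℕ):ℤ)) ((2*Kn:ℕ):ℤ), (wt m)⁻¹)
          + ∑ m ∈ Finset.Icc (-((2*Kn:ℕ):ℤ)) ((2*Kn:ℕ):ℤ), (wt (k+m))⁻¹) := by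
      rw [← Finset.sum_add_distrib, Finset.mul_sum]
      apply Finset.sum_congr rfl
      intro m hm
      simp only [Finset.mem_Icc] at hm
      simp only [hF1, if_pos (show |m| ≤ ((2*Kn:ℕ):ℤ) by rw [abs_le]; omega)]
    rw [hcong]
    have hs1 : ∑ m ∈ Finset.Icc (-((2*Kn:ℕ):ℤ)) ((2*Kn:ℕ):ℤ), (wt m)⁻¹
        ≤ 3 + 2 * Real.log (2*Kn:ℕ) := harmonic_Icc (2*Kn) (by omega)
    have hs2 : ∑ m ∈ Finset.Icc (-((2*Kn:ℕ):ℤ)) ((2*Kn:ℕ):ℤ), (wt (k+m))⁻¹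
        ≤ 3 + 2 * Real.log (3*Kn:ℕ) := by
      have hmap : ∑ m ∈ Finset.Icc (-((2*Kn:ℕ):ℤ)) ((2*Kn:ℕ):ℤ), (wt (k+m))⁻¹
          = ∑ j ∈ Finset.Icc (k + -((2*Kn:ℕ):ℤ)) (k + ((2*Kn:ℕ):ℤ)), (wt j)⁻¹ := by
        rw [← Finset.map_add_left_Icc, Finset.sum_map]
        rfl
      rw [hmap]
      calc ∑ j ∈ Finset.Icc (k + -((2*Kn:ℕ):ℤ)) (k + ((2*Kn:ℕ):ℤ)), (wt j)⁻¹
          ≤ ∑ j ∈ Finset.Icc (-((3*Kn:ℕ):ℤ)) ((3*Kn:ℕ):ℤ), (wt j)⁻¹ := by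
            apply Finset.sum_le_sum_of_subset_of_nonneg
            · obtain ⟨hka, hkb⟩ := abs_le.mp habs_k
              apply Finset.Icc_subset_Icc <;> push_cast <;> omega
            · intro j _ _; exact (inv_nonneg.mpr (wt_pos j).le)
        _ ≤ 3 + 2 * Real.log (3*Kn:ℕ) := harmonic_Icc (3*Kn) (by omega)
    have hl2 : Real.log ((2*Kn:ℕ):ℝ) = Real.log 2 + Real.log Kn := by
      push_cast
      rw [Real.log_mul (by norm_num) (ne_of_gt hKpos)]
    have hl3 : Real.log ((3*Kn:ℕ):ℝ) = Real.log 3 + Real.log Kn := by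
      push_cast
      rw [Real.log_mul (by norm_num) (ne_of_gt hKpos)]
    have hwtkpos := wt_pos k
    have hfin : (∑ m ∈ Finset.Icc (-((2*Kn:ℕ):ℤ)) ((2*Kn:ℕ):ℤ), (wt m)⁻¹)
          + ∑ m ∈ Finset.Icc (-((2*Kn:ℕ):ℤ)) ((2*Kn:ℕ):ℤ), (wt (k+m))⁻¹
        ≤ 12 + 4 * Real.log Kn := by
      rw [hl2] at hs1; rw [hl3] at hs2
      linarith
    exact mul_le_mul_of_nonneg_left hfin (inv_nonneg.mpr hwtkpos.le)
  -- assemble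
  have hsum : Summable f := Summable.of_nonneg_of_le hf0 hle (hF1sum.add hF2sum)
  refine ⟨hsum, ?_⟩
  have hstep : ∑' m, f m ≤ (wt k)⁻¹ * (12 + 4 * Real.log Kn) + 2 * ((Kn:ℝ))⁻¹ := by
    calc ∑' m, f m ≤ ∑' m, (F₁ m + F₂ m) := Summable.tsum_le_tsum hle hsum (hF1sum.add hF2sum)
    _ = ∑' m, F₁ m + ∑' m, F₂ m := Summable.tsum_add hF1sum hF2sum
    _ ≤ _ := add_le_add hF1le hF2le
  have hK1R : (1:ℝ) ≤ (Kn:ℝ) := by exact_mod_cast hK1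
  have hlogK1 : Real.log 2 ≤ Real.log ((Kn:ℝ) + 1) := by
    apply Real.log_le_log (by norm_num)
    linarith
  have hlogmono : Real.log (Kn:ℝ) ≤ Real.log ((Kn:ℝ) + 1) :=
    Real.log_le_log hKpos (by linarith)
  have hnum : 14 + 4 * Real.log Kn ≤ 100 * Real.log ((Kn:ℝ) + 1) := by
    have h2 : (0.6931471803 : ℝ) < Real.log 2 := Real.log_two_gt_d9
    nlinarith
  calc ∑' m, f m ≤ (wt k)⁻¹ * (12 + 4 * Real.log Kn) + 2 * ((Kn:ℝ))⁻¹ := hstep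
  _ = ((Kn:ℝ))⁻¹ * (14 + 4 * Real.log Kn) := by rw [hwtk]; ring
  _ ≤ ((Kn:ℝ))⁻¹ * (100 * Real.log ((Kn:ℝ) + 1)) := by
      apply mul_le_mul_of_nonneg_left hnum (inv_nonneg.mpr hKpos.le)
  _ = 100 * (Real.log (wt k + 1) / wt k) := by rw [hwtk]; ring

lemma tsum_CS {f g : ℤ → ℝ} (hf0 : ∀ i, 0 ≤ f i) (hg0 : ∀ i, 0 ≤ g i)
    (hf : Summable (fun i => f i ^ 2)) (hg : Summable (fun i => g i ^ 2)) :
    Summable (fun i => f i * g i) ∧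
    ∑' i, f i * g i ≤ Real.sqrt (∑' i, f i ^ 2) * Real.sqrt (∑' i, g i ^ 2) := by
  have hsum : Summable (fun i => f i * g i) := by
    apply Summable.of_nonneg_of_le (fun i => mul_nonneg (hf0 i) (hg0 i))
      (fun i => ?_) ((hf.add hg).div_const 2)
    nlinarith [sq_nonneg (f i - g i)]
  refine ⟨hsum, Summable.tsum_le_of_sum_le hsum (fun s => ?_)⟩
  calc ∑ i ∈ s, f i * g i
      ≤ Real.sqrt (∑ i ∈ s, f i ^ 2) * Real.sqrt (∑ i ∈ s, g i ^ 2) :=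
        Real.sum_mul_le_sqrt_mul_sqrt s f g
    _ ≤ Real.sqrt (∑' i, f i ^ 2) * Real.sqrt (∑' i, g i ^ 2) := by
        apply mul_le_mul
          (Real.sqrt_le_sqrt (Summable.sum_le_tsum s (fun i _ => sq_nonneg _) hf))
          (Real.sqrt_le_sqrt (Summable.sum_le_tsum s (fun i _ => sq_nonneg _) hg))
          (Real.sqrt_nonneg _) (Real.sqrt_nonneg _)


/-- The bilinear estimate `H^{-1/2,√log} × H^{1/2} → H^{-1/2}`:
`‖uv‖_{-1/2} ≤ K₀ ‖u‖_{-1/2,√log} ‖v‖_{1/2}`, expressed via Fourier coefficients. -/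
theorem stmt_14 : ∃ K₀ > (0 : ℝ), ∀ u v : ℤ → ℂ,
    Summable (fun n : ℤ => (Real.log (wt n + 1) / wt n) * ‖u n‖ ^ 2) →
    Summable (fun n : ℤ => wt n * ‖v n‖ ^ 2) →
    Summable (fun n : ℤ => ‖conv u v n‖ ^ 2 / wt n) ∧
    ∑' n : ℤ, ‖conv u v n‖ ^ 2 / wt n
      ≤ K₀ ^ 2 * (∑' n : ℤ, (Real.log (wt n + 1) / wt n) * ‖u n‖ ^ 2) *
          (∑' n : ℤ, wt n * ‖v n‖ ^ 2) := by
  refine ⟨10, by norm_num, ?_⟩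
  intro u v hu hv
  set ℓ : ℤ → ℝ := fun n => Real.log (wt n + 1) with hldef
  have hl_pos : ∀ n, 0 < ℓ n := log_wt_pos
  set a : ℤ → ℝ := fun k => Real.sqrt (ℓ k / wt k) * ‖u k‖ with hadef
  set b : ℤ → ℝ := fun m => Real.sqrt (wt m) * ‖v m‖ with hbdef
  have ha0 : ∀ k, 0 ≤ a k := fun k => by positivity
  have hb0 : ∀ m, 0 ≤ b m := fun m => by positivity
  have ha2 : ∀ k, a k ^ 2 = (ℓ k / wt k) * ‖u k‖ ^ 2 := by
    intro k
    rw [hadef]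
    simp only
    rw [mul_pow, Real.sq_sqrt (div_nonneg (hl_pos k).le (wt_pos k).le)]
  have hb2 : ∀ m, b m ^ 2 = wt m * ‖v m‖ ^ 2 := by
    intro m
    rw [hbdef]
    simp only
    rw [mul_pow, Real.sq_sqrt (wt_pos m).le]
  have hA : Summable (fun k => a k ^ 2) := hu.congr (fun k => (ha2 k).symm)
  have hB : Summable (fun m => b m ^ 2) := hv.congr (fun m => (hb2 m).symm)
  set A := ∑' k, a k ^ 2 with hAdef
  set B := ∑' m, b m ^ 2 with hBdef
  have hAeq : (∑' n : ℤ, (Real.log (wt n + 1) / wt n) * ‖u n‖ ^ 2) = A :=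
    tsum_congr (fun k => (ha2 k).symm)
  have hBeq : (∑' n : ℤ, wt n * ‖v n‖ ^ 2) = B := tsum_congr (fun m => (hb2 m).symm)
  have hA0 : 0 ≤ A := tsum_nonneg (fun k => sq_nonneg _)
  have hB0 : 0 ≤ B := tsum_nonneg (fun m => sq_nonneg _)
  -- identities
  have hu_id : ∀ k, ‖u k‖ = Real.sqrt (wt k / ℓ k) * a k := by
    intro k
    rw [hadef]
    simp only
    rw [← mul_assoc, ← Real.sqrt_mul (div_nonneg (wt_pos k).le (hl_pos k).le),
      show wt k / ℓ k * (ℓ k / wt k) = 1 by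
        rw [div_mul_div_comm, mul_comm (wt k) (ℓ k)]
        exact div_self (mul_ne_zero (hl_pos k).ne' (wt_pos k).ne')]
    simp
  have hv_id : ∀ m, ‖v m‖ = (Real.sqrt (wt m))⁻¹ * b m := by
    intro m
    rw [hbdef]
    simp only
    rw [← mul_assoc, inv_mul_cancel₀ (Real.sqrt_pos.mpr (wt_pos m)).ne', one_mul]
  -- shifted b
  have hbshift : ∀ n : ℤ, Summable (fun k => b (n - k) ^ 2) := by
    intro n
    have h := (Equiv.subLeft n).summable_iff (f := fun m => b m ^ 2)
    simp only [Function.comp_def, Equiv.subLeft_apply] at h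
    exact h.mpr hB
  have hBshift_eq : ∀ n : ℤ, ∑' k, b (n - k) ^ 2 = B := by
    intro n
    have h := (Equiv.subLeft n).tsum_eq (fun m => b m ^ 2)
    simpa [Equiv.subLeft_apply] using h
  have habsum : ∀ n : ℤ, Summable (fun k => a k * b (n - k)) := by
    intro n
    apply Summable.of_nonneg_of_le (fun k => mul_nonneg (ha0 k) (hb0 _)) (fun k => ?_)
      ((hA.add (hbshift n)).div_const 2)
    nlinarith [sq_nonneg (a k - b (n - k))]
  -- majorant for products
  have hprod_le : ∀ n k : ℤ, ‖u k‖ * ‖v (n - k)‖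
      ≤ Real.sqrt (2 * wt n / Real.log 2) * (a k * b (n - k)) := by
    intro n k
    have h2 : (0:ℝ) < Real.log 2 := Real.log_pos (by norm_num)
    have hwk : wt k ≤ 2 * wt n * wt (n - k) := by
      calc wt k = wt (n + -(n - k)) := by norm_num
      _ ≤ 2 * wt n * wt (-(n - k)) := wt_le_two_mul n (-(n - k))
      _ = 2 * wt n * wt (n - k) := by rw [wt_neg]
    have hfrac : wt k / (ℓ k * wt (n - k)) ≤ 2 * wt n / Real.log 2 := by
      rw [div_le_div_iff₀ (mul_pos (hl_pos k) (wt_pos (n - k))) h2]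
      have hl2 := log_two_le_log_wt k
      have h3 := wt_pos (n - k)
      have h4 := wt_pos n
      nlinarith [mul_le_mul_of_nonneg_right hwk h2.le,
        mul_le_mul_of_nonneg_left hl2 (by positivity : (0:ℝ) ≤ 2 * wt n * wt (n - k))]
    have hkey : Real.sqrt (wt k / ℓ k) * (Real.sqrt (wt (n - k)))⁻¹
        ≤ Real.sqrt (2 * wt n / Real.log 2) := by
      rw [← Real.sqrt_inv, ← Real.sqrt_mul (div_nonneg (wt_pos k).le (hl_pos k).le)]
      apply Real.sqrt_le_sqrt
      rw [show wt k / ℓ k * (wt (n - k))⁻¹ = wt k / (ℓ k * wt (n - k)) by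
        rw [← div_eq_mul_inv, div_div]]
      exact hfrac
    calc ‖u k‖ * ‖v (n - k)‖
        = (Real.sqrt (wt k / ℓ k) * (Real.sqrt (wt (n - k)))⁻¹) * (a k * b (n - k)) := by
          rw [hu_id k, hv_id (n - k)]; ring
      _ ≤ Real.sqrt (2 * wt n / Real.log 2) * (a k * b (n - k)) := by
          apply mul_le_mul_of_nonneg_right hkey
          exact mul_nonneg (ha0 k) (hb0 _)
  have hPsum : ∀ n : ℤ, Summable (fun k => ‖u k‖ * ‖v (n - k)‖) := by
    intro n
    apply Summable.of_nonneg_of_le (fun k => by positivity) (fun k => hprod_le n k)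
      ((habsum n).mul_left _)
  have hconv_le : ∀ n, ‖conv u v n‖ ≤ ∑' k, ‖u k‖ * ‖v (n - k)‖ := by
    intro n
    have h1 : Summable (fun k => ‖u k * v (n - k)‖) :=
      (hPsum n).congr (fun k => (norm_mul _ _).symm)
    calc ‖conv u v n‖ ≤ ∑' k, ‖u k * v (n - k)‖ := norm_tsum_le_tsum_norm h1
    _ = ∑' k, ‖u k‖ * ‖v (n - k)‖ := tsum_congr (fun k => norm_mul _ _)
  -- the claim for finite sets
  have claim : ∀ S : Finset ℤ, ∑ n ∈ S, ‖conv u v n‖ ^ 2 / wt n ≤ 100 * A * B := by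
    intro S
    set C := ∑ n ∈ S, ‖conv u v n‖ ^ 2 / wt n with hCdef
    have hC0 : 0 ≤ C := Finset.sum_nonneg (fun n _ => div_nonneg (by positivity) (wt_pos n).le)
    set c : ℤ → ℝ := fun n => if n ∈ S then ‖conv u v n‖ / Real.sqrt (wt n) else 0 with hcdef
    have hc0 : ∀ n, 0 ≤ c n := by
      intro n
      rw [hcdef]
      simp only
      split
      · positivity
      · exact le_rfl
    have hc2 : ∑ n ∈ S, c n ^ 2 = C := by
      apply Finset.sum_congr rfl
      intro n hn
      rw [hcdef]
      simp only [if_pos hn]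
      rw [div_pow, Real.sq_sqrt (wt_pos n).le]
    set d : ℤ → ℝ := fun k => Real.sqrt (∑ n ∈ S, (b (n - k) * c n) ^ 2) with hddef
    have hd0 : ∀ k, 0 ≤ d k := fun k => Real.sqrt_nonneg _
    have hd2 : ∀ k, d k ^ 2 = ∑ n ∈ S, (b (n - k) * c n) ^ 2 := fun k =>
      Real.sq_sqrt (Finset.sum_nonneg (fun n _ => sq_nonneg _))
    have hslice : ∀ n : ℤ, Summable (fun k => (b (n - k) * c n) ^ 2) := by
      intro n
      exact ((hbshift n).mul_left (c n ^ 2)).congr (fun k => by ring)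
    have hdsum : Summable (fun k => d k ^ 2) := by
      apply Summable.congr ?_ (fun k => (hd2 k).symm)
      exact summable_sum (fun n _ => hslice n)
    have hdtsum : ∑' k, d k ^ 2 = C * B := by
      calc ∑' k, d k ^ 2 = ∑' k, ∑ n ∈ S, (b (n - k) * c n) ^ 2 := tsum_congr hd2
      _ = ∑ n ∈ S, ∑' k, (b (n - k) * c n) ^ 2 := Summable.tsum_finsetSum (fun n _ => hslice n)
      _ = ∑ n ∈ S, c n ^ 2 * B := by
          apply Finset.sum_congr rfl
          intro n _
          calc ∑' k, (b (n - k) * c n) ^ 2 = ∑' k, c n ^ 2 * b (n - k) ^ 2 :=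
                tsum_congr (fun k => by ring)
          _ = c n ^ 2 * ∑' k, b (n - k) ^ 2 := tsum_mul_left
          _ = c n ^ 2 * B := by rw [hBshift_eq n]
      _ = C * B := by rw [← Finset.sum_mul, hc2]
    -- key per-k estimate via finite Cauchy-Schwarz
    have hEstep : ∀ k, ∑ n ∈ S, c n * (b (n - k) * ((Real.sqrt (wt (n - k)) * Real.sqrt (wt n))⁻¹))
        ≤ d k * Real.sqrt (100 * (ℓ k / wt k)) := by
      intro k
      obtain ⟨hksum, hkle⟩ := key_lemma k
      have hre : Summable (fun n : ℤ => (wt (n - k) * wt n)⁻¹) := by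
        have h := (Equiv.subRight k).summable_iff (f := fun m : ℤ => (wt m * wt (k + m))⁻¹)
        simp only [Function.comp_def, Equiv.subRight_apply] at h
        apply (h.mpr hksum).congr
        intro n
        rw [show k + (n - k) = n by ring]
      have hretsum : ∑' n : ℤ, (wt (n - k) * wt n)⁻¹ = ∑' m : ℤ, (wt m * wt (k + m))⁻¹ := by
        have h := (Equiv.subRight k).tsum_eq (fun m : ℤ => (wt m * wt (k + m))⁻¹)
        simp only [Equiv.subRight_apply] at h
        rw [← h]
        apply tsum_congr
        intro n
        rw [show k + (n - k) = n by ring]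
      have hg2 : ∀ n : ℤ, ((Real.sqrt (wt (n - k)) * Real.sqrt (wt n))⁻¹) ^ 2
          = (wt (n - k) * wt n)⁻¹ := by
        intro n
        rw [mul_inv, mul_pow, inv_pow, inv_pow,
          Real.sq_sqrt (wt_pos (n - k)).le, Real.sq_sqrt (wt_pos n).le, mul_inv]
      calc ∑ n ∈ S, c n * (b (n - k) * ((Real.sqrt (wt (n - k)) * Real.sqrt (wt n))⁻¹))
          = ∑ n ∈ S, (b (n - k) * c n) * ((Real.sqrt (wt (n - k)) * Real.sqrt (wt n))⁻¹) := by
            apply Finset.sum_congr rfl; intro n _; ring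
        _ ≤ Real.sqrt (∑ n ∈ S, (b (n - k) * c n) ^ 2)
              * Real.sqrt (∑ n ∈ S, ((Real.sqrt (wt (n - k)) * Real.sqrt (wt n))⁻¹) ^ 2) :=
            Real.sum_mul_le_sqrt_mul_sqrt S _ _
        _ ≤ d k * Real.sqrt (100 * (ℓ k / wt k)) := by
            rw [hddef]
            apply mul_le_mul_of_nonneg_left _ (Real.sqrt_nonneg _)
            apply Real.sqrt_le_sqrt
            calc ∑ n ∈ S, ((Real.sqrt (wt (n - k)) * Real.sqrt (wt n))⁻¹) ^ 2
                = ∑ n ∈ S, (wt (n - k) * wt n)⁻¹ := Finset.sum_congr rfl (fun n _ => hg2 n)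
              _ ≤ ∑' n : ℤ, (wt (n - k) * wt n)⁻¹ :=
                  Summable.sum_le_tsum S (fun n _ => inv_nonneg.mpr (mul_nonneg (wt_pos _).le (wt_pos _).le)) hre
              _ = ∑' m : ℤ, (wt m * wt (k + m))⁻¹ := hretsum
              _ ≤ 100 * (ℓ k / wt k) := hkle
    have hgE : ∀ k, Real.sqrt (wt k / ℓ k) * Real.sqrt (100 * (ℓ k / wt k)) = 10 := by
      intro k
      rw [← Real.sqrt_mul (div_nonneg (wt_pos k).le (hl_pos k).le)]
      rw [show wt k / ℓ k * (100 * (ℓ k / wt k)) = 100 by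
        have h1 : ℓ k ≠ 0 := (hl_pos k).ne'
        have h2 : wt k ≠ 0 := (wt_pos k).ne'
        field_simp]
      rw [show (100:ℝ) = 10 ^ 2 by norm_num, Real.sqrt_sq (by norm_num : (0:ℝ) ≤ 10)]
    -- chain
    have hRsum : ∀ n ∈ S, Summable
        (fun k => c n * (Real.sqrt (wt n))⁻¹ * (‖u k‖ * ‖v (n - k)‖)) :=
      fun n _ => (hPsum n).mul_left _
    have step1 : C ≤ ∑ n ∈ S, ∑' k, c n * (Real.sqrt (wt n))⁻¹ * (‖u k‖ * ‖v (n - k)‖) := by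
      rw [hCdef]
      apply Finset.sum_le_sum
      intro n hn
      have h1 : ‖conv u v n‖ ^ 2 / wt n
          = c n * (Real.sqrt (wt n))⁻¹ * ‖conv u v n‖ := by
        rw [hcdef]
        simp only [if_pos hn]
        set s := Real.sqrt (wt n) with hs
        have hsq : s * s = wt n := Real.mul_self_sqrt (wt_pos n).le
        have hsne : s ≠ 0 := by
          rw [hs]; exact (Real.sqrt_pos.mpr (wt_pos n)).ne'
        rw [← hsq]
        field_simp
      calc ‖conv u v n‖ ^ 2 / wt n = c n * (Real.sqrt (wt n))⁻¹ * ‖conv u v n‖ := h1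
        _ ≤ c n * (Real.sqrt (wt n))⁻¹ * ∑' k, ‖u k‖ * ‖v (n - k)‖ := by
            apply mul_le_mul_of_nonneg_left (hconv_le n) (by positivity)
        _ = ∑' k, c n * (Real.sqrt (wt n))⁻¹ * (‖u k‖ * ‖v (n - k)‖) := tsum_mul_left.symm
    have step2 : ∑ n ∈ S, ∑' k, c n * (Real.sqrt (wt n))⁻¹ * (‖u k‖ * ‖v (n - k)‖)
        = ∑' k, ∑ n ∈ S, c n * (Real.sqrt (wt n))⁻¹ * (‖u k‖ * ‖v (n - k)‖) :=
      (Summable.tsum_finsetSum hRsum).symm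
    have step3 : ∀ k, ∑ n ∈ S, c n * (Real.sqrt (wt n))⁻¹ * (‖u k‖ * ‖v (n - k)‖)
        ≤ 10 * (a k * d k) := by
      intro k
      have he : ∀ n ∈ S, c n * (Real.sqrt (wt n))⁻¹ * (‖u k‖ * ‖v (n - k)‖)
          = (Real.sqrt (wt k / ℓ k) * a k)
            * (c n * (b (n - k) * ((Real.sqrt (wt (n - k)) * Real.sqrt (wt n))⁻¹))) := by
        intro n _
        rw [hu_id k, hv_id (n - k), mul_inv]
        ring
      rw [Finset.sum_congr rfl he, ← Finset.mul_sum]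
      calc (Real.sqrt (wt k / ℓ k) * a k)
            * ∑ n ∈ S, c n * (b (n - k) * ((Real.sqrt (wt (n - k)) * Real.sqrt (wt n))⁻¹))
          ≤ (Real.sqrt (wt k / ℓ k) * a k) * (d k * Real.sqrt (100 * (ℓ k / wt k))) := by
            apply mul_le_mul_of_nonneg_left (hEstep k)
            exact mul_nonneg (Real.sqrt_nonneg _) (ha0 k)
        _ = (Real.sqrt (wt k / ℓ k) * Real.sqrt (100 * (ℓ k / wt k))) * (a k * d k) := by ring
        _ = 10 * (a k * d k) := by rw [hgE k]
    obtain ⟨hadsum, hadle⟩ := tsum_CS ha0 hd0 hA hdsum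
    have hLsum : Summable (fun k => ∑ n ∈ S, c n * (Real.sqrt (wt n))⁻¹ * (‖u k‖ * ‖v (n - k)‖)) := by
      apply Summable.of_nonneg_of_le
        (fun k => Finset.sum_nonneg (fun n _ => by positivity)) step3 (hadsum.mul_left 10)
    have step4 : ∑' k, ∑ n ∈ S, c n * (Real.sqrt (wt n))⁻¹ * (‖u k‖ * ‖v (n - k)‖)
        ≤ ∑' k, 10 * (a k * d k) :=
      Summable.tsum_le_tsum step3 hLsum (hadsum.mul_left 10)
    have hfin : C ≤ 10 * (Real.sqrt A * Real.sqrt (C * B)) := by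
      calc C ≤ ∑ n ∈ S, ∑' k, c n * (Real.sqrt (wt n))⁻¹ * (‖u k‖ * ‖v (n - k)‖) := step1
      _ = ∑' k, ∑ n ∈ S, c n * (Real.sqrt (wt n))⁻¹ * (‖u k‖ * ‖v (n - k)‖) := step2
      _ ≤ ∑' k, 10 * (a k * d k) := step4
      _ = 10 * ∑' k, a k * d k := tsum_mul_left
      _ ≤ 10 * (Real.sqrt A * Real.sqrt (∑' k, d k ^ 2)) := by
          apply mul_le_mul_of_nonneg_left hadle (by norm_num)
      _ = 10 * (Real.sqrt A * Real.sqrt (C * B)) := by rw [hdtsum]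
    -- resolve the quadratic inequality
    rcases eq_or_lt_of_le hC0 with hCz | hCpos
    · rw [← hCz]; positivity
    · have hsC : Real.sqrt (C * B) = Real.sqrt C * Real.sqrt B := Real.sqrt_mul hC0 B
      have hsCpos : 0 < Real.sqrt C := Real.sqrt_pos.mpr hCpos
      have hCC : Real.sqrt C * Real.sqrt C = C := Real.mul_self_sqrt hC0
      have hroot : Real.sqrt C ≤ 10 * (Real.sqrt A * Real.sqrt B) := by
        have h2 : Real.sqrt C * Real.sqrt C ≤ (10 * (Real.sqrt A * Real.sqrt B)) * Real.sqrt C := by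
          rw [hCC]
          calc C ≤ 10 * (Real.sqrt A * Real.sqrt (C * B)) := hfin
          _ = (10 * (Real.sqrt A * Real.sqrt B)) * Real.sqrt C := by rw [hsC]; ring
        exact le_of_mul_le_mul_right h2 hsCpos
      calc C = Real.sqrt C * Real.sqrt C := hCC.symm
      _ ≤ (10 * (Real.sqrt A * Real.sqrt B)) * (10 * (Real.sqrt A * Real.sqrt B)) :=
          mul_le_mul hroot hroot hsCpos.le (by positivity)
      _ = 100 * (Real.sqrt A * Real.sqrt A) * (Real.sqrt B * Real.sqrt B) := by ring
      _ = 100 * A * B := by rw [Real.mul_self_sqrt hA0, Real.mul_self_sqrt hB0]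
  -- conclude
  have hX0 : ∀ n : ℤ, 0 ≤ ‖conv u v n‖ ^ 2 / wt n := fun n => div_nonneg (by positivity) (wt_pos n).le
  have hsummable : Summable (fun n : ℤ => ‖conv u v n‖ ^ 2 / wt n) :=
    summable_of_sum_le hX0 claim
  refine ⟨hsummable, ?_⟩
  rw [hAeq, hBeq]
  calc ∑' n : ℤ, ‖conv u v n‖ ^ 2 / wt n ≤ 100 * A * B :=
      Summable.tsum_le_of_sum_le hsummable claim
  _ = 10 ^ 2 * A * B := by norm_num
end

section
/- Let 0 < q < 1, β > 1, and ε = β/|log(1−q)|. Then ∑_{n=1}^∞ (log(1+n)/n) q^{2n} ∼ (1/2)(log(1−q))² as q → 1⁻; consequently, the function u_{0,q}(x) = v_q(e^{ix}) + conj(v_q(e^{ix})) with v_q(z) = εqz/(1−qz) satisfies ‖u_{0,q}‖²_{-1/2,√log} → β² as q → 1⁻, while each Fourier coefficient û_{0,q}(n) = ε q^{n+1} → 0; hence u_{0,q} converges weakly to 0 in H^{-1/2,√log}_{r,0} but not in norm. -/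
open Filter Finset


-- partial fraction identity
lemma pf_sum (n : ℕ) :
    ∑ j ∈ range n, (1:ℝ)/(((j:ℝ)+1)*((n:ℝ)-(j:ℝ))) = 2*(harmonic n : ℝ)/((n:ℝ)+1) := by
  have hH : (harmonic n : ℝ) = ∑ j ∈ range n, (1:ℝ)/((j:ℝ)+1) := by
    simp [harmonic, one_div]
  have hrefl : ∑ j ∈ range n, (1:ℝ)/((n:ℝ)-(j:ℝ)) = ∑ j ∈ range n, (1:ℝ)/((j:ℝ)+1) := by
    rw [← Finset.sum_range_reflect (fun j => (1:ℝ)/((j:ℝ)+1)) n]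
    apply Finset.sum_congr rfl
    intro j hj
    have hj' : j < n := Finset.mem_range.mp hj
    have : ((n - 1 - j : ℕ) : ℝ) + 1 = (n:ℝ) - (j:ℝ) := by
      have h1 : n - 1 - j + 1 = n - j := by omega
      have h2 : ((n - j : ℕ) : ℝ) = (n:ℝ) - (j:ℝ) := by
        push_cast [Nat.cast_sub hj'.le]; ring
      rw [← h2, ← h1]; push_cast; ring
    rw [this]
  have key : ∀ j ∈ range n,
      (1:ℝ)/(((j:ℝ)+1)*((n:ℝ)-(j:ℝ))) =
        (1/((n:ℝ)+1)) * ((1:ℝ)/((j:ℝ)+1) + (1:ℝ)/((n:ℝ)-(j:ℝ))) := by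
    intro j hj
    have hj' : j < n := Finset.mem_range.mp hj
    have h1 : ((j:ℝ)+1) ≠ 0 := by positivity
    have h2 : ((n:ℝ)-(j:ℝ)) ≠ 0 := by
      have : (j:ℝ) < (n:ℝ) := by exact_mod_cast hj'
      linarith
    have h3 : ((n:ℝ)+1) ≠ 0 := by positivity
    field_simp
    ring
  rw [Finset.sum_congr rfl key, ← Finset.mul_sum, Finset.sum_add_distrib, hrefl, ← hH]
  ring

section
variable {r : ℝ} (hr0 : 0 ≤ r) (hr1 : r < 1)

lemma hasSum_log1 (hr0 : 0 ≤ r) (hr1 : r < 1) :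
    HasSum (fun n : ℕ => r^(n+1)/((n:ℝ)+1)) (-Real.log (1-r)) := by
  have := Real.hasSum_pow_div_log_of_abs_lt_one (x := r) (by rw [abs_of_nonneg hr0]; exact hr1)
  exact_mod_cast this

lemma hasSum_a (hr0 : 0 ≤ r) (hr1 : r < 1) :
    HasSum (fun n : ℕ => r^n/(n:ℝ)) (-Real.log (1-r)) := by
  have h := hasSum_log1 hr0 hr1
  have : HasSum (fun n : ℕ => r^(n+1)/((n+1:ℕ):ℝ)) (-Real.log (1-r)) := by
    convert h using 2 with n; push_cast; ring
  have h2 := (hasSum_nat_add_iff (f := fun n : ℕ => r^n/(n:ℝ)) 1).mp this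
  simpa using h2
end



lemma hasSum_sq {r : ℝ} (hr0 : 0 ≤ r) (hr1 : r < 1) :
    HasSum (fun n : ℕ => (2*(harmonic n : ℝ)/((n:ℝ)+1)) * r^(n+1))
      ((Real.log (1-r))^2) := by
  set a : ℕ → ℝ := fun n => r^n/(n:ℝ) with ha_def
  set L : ℝ := -Real.log (1-r) with hL_def
  have ha : HasSum a L := hasSum_a hr0 hr1
  have hnorm : Summable fun n => ‖a n‖ := by
    refine ha.summable.congr fun n => ?_
    rw [Real.norm_eq_abs, abs_of_nonneg (by positivity)]
  have hc : HasSum (fun n => ∑ k ∈ range (n+1), a k * a (n-k)) (L*L) := by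
    have := hasSum_sum_range_mul_of_summable_norm hnorm hnorm
    rwa [ha.tsum_eq] at this
  set c : ℕ → ℝ := fun n => ∑ k ∈ range (n+1), a k * a (n-k) with hc_def
  have ha0 : a 0 = 0 := by simp [ha_def]
  have hshift : HasSum (fun n => c (n+1)) (L*L) := by
    rw [hasSum_nat_add_iff 1]
    simpa [hc_def, ha0] using hc
  have hcn : ∀ n : ℕ, c (n+1) = (2*(harmonic n : ℝ)/((n:ℝ)+1)) * r^(n+1) := by
    intro n
    have : c (n+1) = ∑ k ∈ range n, a (k+1) * a (n-k) := by
      rw [hc_def]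
      simp only []
      rw [Finset.sum_range_succ' (fun k => a k * a (n+1-k)) (n+1)]
      rw [ha0, Finset.sum_range_succ]
      simp [ha0]
    rw [this]
    have hterm : ∀ k ∈ range n, a (k+1) * a (n-k) =
        r^(n+1) * ((1:ℝ)/(((k:ℝ)+1)*((n:ℝ)-(k:ℝ)))) := by
      intro k hk
      have hk' : k < n := Finset.mem_range.mp hk
      have hpow : r^(k+1) * r^(n-k) = r^(n+1) := by
        rw [← pow_add]; congr 1; omega
      have hcast : ((n-k : ℕ) : ℝ) = (n:ℝ) - (k:ℝ) := by
        push_cast [Nat.cast_sub hk'.le]; ring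
      have h1 : ((k:ℝ)+1) ≠ 0 := by positivity
      have h2 : ((n:ℝ)-(k:ℝ)) ≠ 0 := by
        have : (k:ℝ) < (n:ℝ) := by exact_mod_cast hk'
        linarith
      simp only [ha_def, hcast]
      push_cast
      rw [div_mul_div_comm, hpow, mul_one_div]
    rw [Finset.sum_congr rfl hterm, ← Finset.mul_sum, pf_sum]
    ring
  rw [funext hcn] at hshift
  have hLL : L*L = (Real.log (1-r))^2 := by rw [hL_def]; ring
  rwa [hLL] at hshift



lemma log_harm_bound (n : ℕ) : |Real.log ((n:ℝ)+2) - (harmonic n : ℝ)| ≤ 1 := by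
  have h1 : Real.log ((n:ℝ)+1) ≤ (harmonic n : ℝ) := by
    have := log_add_one_le_harmonic n
    push_cast at this ⊢
    convert this using 2
  have h2 : (harmonic n : ℝ) ≤ 1 + Real.log n := harmonic_le_one_add_log n
  have hlog2 : Real.log 2 ≤ 1 := by
    rw [Real.log_le_iff_le_exp (by norm_num)]
    linarith [Real.add_one_le_exp 1]
  have hup : Real.log ((n:ℝ)+2) - (harmonic n : ℝ) ≤ 1 := by
    have : Real.log ((n:ℝ)+2) ≤ Real.log 2 + Real.log ((n:ℝ)+1) := by
      rw [← Real.log_mul (by norm_num) (by positivity)]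
      apply Real.log_le_log (by positivity)
      nlinarith [Nat.cast_nonneg (α := ℝ) n]
    linarith
  have hdown : (harmonic n : ℝ) - Real.log ((n:ℝ)+2) ≤ 1 := by
    have hn : Real.log (n:ℝ) ≤ Real.log ((n:ℝ)+2) := by
      rcases Nat.eq_zero_or_pos n with h | h
      · simp [h]; positivity
      · apply Real.log_le_log (by exact_mod_cast h); linarith
    linarith
  rw [abs_le]; constructor <;> linarith

lemma T_bound {r : ℝ} (hr0 : 0 ≤ r) (hr1 : r < 1) :
    Summable (fun n : ℕ => (Real.log ((n:ℝ)+2)/((n:ℝ)+1)) * r^(n+1)) ∧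
    |(∑' n : ℕ, (Real.log ((n:ℝ)+2)/((n:ℝ)+1)) * r^(n+1)) - (1/2)*(Real.log (1-r))^2|
      ≤ -Real.log (1-r) := by
  set g : ℕ → ℝ := fun n => (Real.log ((n:ℝ)+2)/((n:ℝ)+1)) * r^(n+1) with hg_def
  set h : ℕ → ℝ := fun n => ((harmonic n : ℝ)/((n:ℝ)+1)) * r^(n+1) with hh_def
  have hh : HasSum h ((1/2)*(Real.log (1-r))^2) := by
    have h2 := (hasSum_sq hr0 hr1).mul_left (1/2)
    have hfe : (fun n : ℕ => (1/2) * ((2*(harmonic n : ℝ)/((n:ℝ)+1)) * r^(n+1))) = h := by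
      funext n; simp only [hh_def]; ring
    rwa [hfe] at h2
  have hb : HasSum (fun n : ℕ => r^(n+1)/((n:ℝ)+1)) (-Real.log (1-r)) := hasSum_log1 hr0 hr1
  have keybound : ∀ n : ℕ, |g n - h n| ≤ r^(n+1)/((n:ℝ)+1) := by
    intro n
    have heq : g n - h n = ((Real.log ((n:ℝ)+2) - (harmonic n : ℝ))/((n:ℝ)+1)) * r^(n+1) := by
      simp only [hg_def, hh_def]; ring
    rw [heq, abs_mul, abs_div, abs_of_nonneg (pow_nonneg hr0 _),
      abs_of_nonneg (by positivity : (0:ℝ) ≤ (n:ℝ)+1)]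
    calc |Real.log ((n:ℝ)+2) - (harmonic n : ℝ)|/((n:ℝ)+1) * r^(n+1)
        ≤ 1/((n:ℝ)+1) * r^(n+1) := by
          gcongr
          exact log_harm_bound n
      _ = r^(n+1)/((n:ℝ)+1) := by ring
  have hdsum : Summable (fun n => g n - h n) :=
    Summable.of_norm_bounded hb.summable keybound
  have hgsum : Summable g := by
    have := hdsum.add hh.summable
    simpa using this
  refine ⟨hgsum, ?_⟩
  rw [← hh.tsum_eq, ← Summable.tsum_sub hgsum hh.summable]
  calc |∑' n, (g n - h n)| ≤ ∑' n, |g n - h n| := by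
        have := norm_tsum_le_tsum_norm (f := fun n => g n - h n)
          (by simpa [Real.norm_eq_abs] using hdsum.abs)
        simpa [Real.norm_eq_abs] using this
    _ ≤ ∑' n : ℕ, r^(n+1)/((n:ℝ)+1) := Summable.tsum_le_tsum keybound hdsum.abs hb.summable
    _ = -Real.log (1-r) := hb.tsum_eq

noncomputable def Tfun (r : ℝ) : ℝ := ∑' n : ℕ, (Real.log ((n:ℝ)+2)/((n:ℝ)+1)) * r^(n+1)


section
notation "F" => nhdsWithin (1:ℝ) (Set.Ioo (0:ℝ) 1)

lemma hMbot : Tendsto (fun q : ℝ => Real.log (1-q)) F atBot := by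
  have h1 : Tendsto (fun q : ℝ => 1-q) F (nhdsWithin 0 (Set.Ioi 0)) := by
    apply tendsto_nhdsWithin_of_tendsto_nhds_of_eventually_within
    · have : Tendsto (fun q : ℝ => 1-q) (nhds 1) (nhds 0) := by
        have h := ((continuous_const (y := (1:ℝ))).sub continuous_id).tendsto (1:ℝ)
        simpa [Pi.sub_def] using h
      exact this.mono_left nhdsWithin_le_nhds
    · filter_upwards [self_mem_nhdsWithin] with q hq
      simp [Set.mem_Ioi]; linarith [hq.2]
  exact Real.tendsto_log_nhdsGT_zero.comp h1

lemma hM : Tendsto (fun q : ℝ => -Real.log (1-q)) F atTop :=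
  tendsto_neg_atBot_atTop.comp hMbot

lemma hM2 : Tendsto (fun q : ℝ => -Real.log (1-q^2)) F atTop := by
  have h1 : Tendsto (fun q : ℝ => 1-q^2) F (nhdsWithin 0 (Set.Ioi 0)) := by
    apply tendsto_nhdsWithin_of_tendsto_nhds_of_eventually_within
    · have : Tendsto (fun q : ℝ => 1-q^2) (nhds 1) (nhds 0) := by
        have h := ((continuous_const (y := (1:ℝ))).sub (continuous_pow 2)).tendsto (1:ℝ)
        simpa [Pi.sub_def] using h
      exact this.mono_left nhdsWithin_le_nhds
    · filter_upwards [self_mem_nhdsWithin] with q hq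
      simp only [Set.mem_Ioi]
      nlinarith [hq.1, hq.2]
  have h2 := Real.tendsto_log_nhdsGT_zero.comp h1
  exact tendsto_neg_atBot_atTop.comp h2

lemma hratio : Tendsto (fun q : ℝ => (-Real.log (1-q^2))/(-Real.log (1-q))) F (nhds 1) := by
  have hlog2 : Tendsto (fun q : ℝ => Real.log (1+q)) F (nhds (Real.log 2)) := by
    have : Tendsto (fun q : ℝ => Real.log (1+q)) (nhds 1) (nhds (Real.log 2)) := by
      have h : ContinuousAt (fun q : ℝ => Real.log (1+q)) 1 := by
        apply (Real.continuousAt_log (by norm_num : (1:ℝ)+1 ≠ 0)).comp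
        exact (continuous_const.add continuous_id).continuousAt
      have h2 : (2:ℝ) = 1+1 := by norm_num
      rw [h2]
      exact h.tendsto
    exact this.mono_left nhdsWithin_le_nhds
  have hdiv : Tendsto (fun q : ℝ => Real.log (1+q)/(-Real.log (1-q))) F (nhds 0) :=
    hlog2.div_atTop hM
  have heq : ∀ᶠ q in F, 1 - Real.log (1+q)/(-Real.log (1-q))
      = (-Real.log (1-q^2))/(-Real.log (1-q)) := by
    filter_upwards [self_mem_nhdsWithin] with q hq
    have hq0 := hq.1; have hq1 := hq.2
    have hpos : 0 < -Real.log (1-q) := by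
      have : Real.log (1-q) < 0 := Real.log_neg (by linarith) (by linarith)
      linarith
    have hfac : Real.log (1-q^2) = Real.log (1-q) + Real.log (1+q) := by
      rw [show 1-q^2 = (1-q)*(1+q) by ring]
      exact Real.log_mul (by linarith) (by linarith)
    have ha : Real.log (1-q) ≠ 0 := by intro h; rw [h] at hpos; simp at hpos
    rw [hfac, neg_div_neg_eq, add_div, div_self ha, div_neg, sub_neg_eq_add]
  have := (tendsto_const_nhds.sub hdiv).congr' heq
  simpa using this

theorem main1 : Tendsto (fun q : ℝ => Tfun (q^2) / (Real.log (1-q))^2) F (nhds (1/2)) := by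
  set M : ℝ → ℝ := fun q => -Real.log (1-q) with hM_def
  set M2 : ℝ → ℝ := fun q => -Real.log (1-q^2) with hM2_def
  set D : ℝ → ℝ := fun q => Tfun (q^2) - (1/2)*(Real.log (1-q^2))^2 with hD_def
  have hsplit : ∀ q : ℝ, Tfun (q^2) / (Real.log (1-q))^2
      = (1/2)*((M2 q/M q)^2) + D q/(M q)^2 := by
    intro q
    have h1 : (Real.log (1-q))^2 = (M q)^2 := by simp [hM_def]
    have h2 : (Real.log (1-q^2))^2 = (M2 q)^2 := by simp [hM2_def]
    rw [h1]
    have : Tfun (q^2) = (1/2)*(M2 q)^2 + D q := by simp [hD_def, h2]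
    rw [this, add_div, div_pow, mul_div_assoc]
  have hDlim : Tendsto (fun q => D q/(M q)^2) F (nhds 0) := by
    apply squeeze_zero_norm' (a := fun q => (M2 q/M q) * (1/M q))
    · filter_upwards [self_mem_nhdsWithin] with q hq
      have hq0 := hq.1; have hq1 := hq.2
      have hpos : 0 < M q := by
        have : Real.log (1-q) < 0 := Real.log_neg (by linarith) (by linarith)
        simp only [hM_def]; linarith
      have hbound : |D q| ≤ M2 q := by
        have h := (T_bound (r := q^2) (by positivity) (by nlinarith)).2
        simpa [hD_def, hM2_def, Tfun] using h
      rw [Real.norm_eq_abs, abs_div, abs_of_nonneg (by positivity : (0:ℝ) ≤ (M q)^2)]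
      calc |D q|/(M q)^2 ≤ M2 q/(M q)^2 := by gcongr
        _ = (M2 q/M q) * (1/M q) := by rw [pow_two, ← div_div, div_eq_mul_one_div]
    · have h1 : Tendsto (fun q : ℝ => 1/M q) F (nhds 0) :=
        Tendsto.div_atTop (tendsto_const_nhds (x := (1:ℝ))) hM
      have h2 := hratio.mul h1
      rw [show (1:ℝ)*0 = 0 by norm_num] at h2
      exact h2
  have hmain := ((tendsto_const_nhds (x := (1/2:ℝ))).mul ((hratio.pow 2))).add hDlim
  have : Tendsto (fun q : ℝ => (1/2)*((M2 q/M q)^2) + D q/(M q)^2) F (nhds (1/2)) := by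
    convert hmain using 2
    norm_num
  exact (funext hsplit : (fun q : ℝ => Tfun (q^2) / (Real.log (1-q))^2) = _) ▸ this
end





/-- With `ε = β/|log(1−q)|`, `β > 1`: the asymptotics
`∑_{n≥1} (log(1+n)/n) q^{2n} ∼ ½(log(1−q))²` as `q → 1⁻`; hence
`‖u_{0,q}‖²_{-1/2,√log} = 2ε² ∑_{n≥1} (log(1+n)/n) q^{2n} → β²`, while each Fourier
coefficient `ε q^n → 0`; thus `u_{0,q} ⇀ 0` weakly but not in norm. -/
theorem stmt_18 (β : ℝ) (hβ : 1 < β) :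
    Tendsto (fun q : ℝ =>
        (∑' n : ℕ, (Real.log (1 + ((n : ℝ) + 1)) / ((n : ℝ) + 1)) * q ^ (2 * (n + 1)))
          / (Real.log (1 - q)) ^ 2)
      (nhdsWithin 1 (Set.Ioo (0 : ℝ) 1)) (nhds (1 / 2)) ∧
    Tendsto (fun q : ℝ =>
        2 * (β / |Real.log (1 - q)|) ^ 2 *
          ∑' n : ℕ, (Real.log (1 + ((n : ℝ) + 1)) / ((n : ℝ) + 1)) * q ^ (2 * (n + 1)))
      (nhdsWithin 1 (Set.Ioo (0 : ℝ) 1)) (nhds (β ^ 2)) ∧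
    (∀ n : ℕ, Tendsto (fun q : ℝ => (β / |Real.log (1 - q)|) * q ^ (n + 1))
      (nhdsWithin 1 (Set.Ioo (0 : ℝ) 1)) (nhds 0)) ∧
    ¬ Tendsto (fun q : ℝ =>
        2 * (β / |Real.log (1 - q)|) ^ 2 *
          ∑' n : ℕ, (Real.log (1 + ((n : ℝ) + 1)) / ((n : ℝ) + 1)) * q ^ (2 * (n + 1)))
      (nhdsWithin 1 (Set.Ioo (0 : ℝ) 1)) (nhds 0) := by
  have htsum : ∀ q : ℝ,
      (∑' n : ℕ, (Real.log (1 + ((n : ℝ) + 1)) / ((n : ℝ) + 1)) * q ^ (2 * (n + 1)))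
        = Tfun (q^2) := by
    intro q
    apply tsum_congr
    intro n
    rw [show (1:ℝ) + ((n:ℝ)+1) = (n:ℝ)+2 by ring, pow_mul]
  have p1 : Tendsto (fun q : ℝ =>
      (∑' n : ℕ, (Real.log (1 + ((n : ℝ) + 1)) / ((n : ℝ) + 1)) * q ^ (2 * (n + 1)))
        / (Real.log (1 - q)) ^ 2)
      (nhdsWithin 1 (Set.Ioo (0 : ℝ) 1)) (nhds (1 / 2)) := by
    simpa only [htsum] using main1
  have p2 : Tendsto (fun q : ℝ =>
      2 * (β / |Real.log (1 - q)|) ^ 2 *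
        ∑' n : ℕ, (Real.log (1 + ((n : ℝ) + 1)) / ((n : ℝ) + 1)) * q ^ (2 * (n + 1)))
      (nhdsWithin 1 (Set.Ioo (0 : ℝ) 1)) (nhds (β ^ 2)) := by
    have heq : ∀ q : ℝ,
        2 * (β / |Real.log (1 - q)|) ^ 2 *
          (∑' n : ℕ, (Real.log (1 + ((n : ℝ) + 1)) / ((n : ℝ) + 1)) * q ^ (2 * (n + 1)))
        = (2 * β^2) *
          ((∑' n : ℕ, (Real.log (1 + ((n : ℝ) + 1)) / ((n : ℝ) + 1)) * q ^ (2 * (n + 1)))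
            / (Real.log (1 - q)) ^ 2) := by
      intro q
      rw [div_pow, sq_abs]
      ring
    have h := (tendsto_const_nhds (x := 2*β^2)).mul p1
    rw [show (2*β^2) * (1/2) = β^2 by ring] at h
    exact h.congr fun q => (heq q).symm
  refine ⟨p1, p2, ?_, ?_⟩
  · intro n
    have habs : Tendsto (fun q : ℝ => |Real.log (1 - q)|)
        (nhdsWithin 1 (Set.Ioo (0 : ℝ) 1)) atTop := tendsto_abs_atBot_atTop.comp hMbot
    have hdiv : Tendsto (fun q : ℝ => β / |Real.log (1 - q)|)
        (nhdsWithin 1 (Set.Ioo (0 : ℝ) 1)) (nhds 0) :=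
      Tendsto.div_atTop tendsto_const_nhds habs
    have hpow : Tendsto (fun q : ℝ => q ^ (n+1))
        (nhdsWithin 1 (Set.Ioo (0 : ℝ) 1)) (nhds 1) :=
      ((continuous_pow (n+1)).tendsto' 1 1 (one_pow _)).mono_left nhdsWithin_le_nhds
    have h := hdiv.mul hpow
    rw [show (0:ℝ) * 1 = 0 by norm_num] at h
    exact h
  · intro hcon
    haveI : (nhdsWithin (1:ℝ) (Set.Ioo (0:ℝ) 1)).NeBot := by
      rw [← mem_closure_iff_nhdsWithin_neBot, closure_Ioo (by norm_num : (0:ℝ) ≠ 1)]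
      exact ⟨by norm_num, le_refl 1⟩
    have := tendsto_nhds_unique p2 hcon
    nlinarith
end

section
/- Let F₋(μ,q) := ∫₀^q ε q t^{ε+μ} (1−qt)^ε / ((q−t)^ε (1−qt)) dt with ε = β/|log(1−q)| and β > 0 fixed. Then for every fixed μ > 0, F₋(μ,q) → β as q → 1⁻; more precisely F₋(μ,q) ∼ −ε·log(1−q²) as q → 1⁻. -/
open Filter MeasureTheory Set Topology

/-- The integral `F₋(μ,q)` with `ε = β/|log(1−q)|`. -/
noncomputable def Fminus (β μ q : ℝ) : ℝ :=
  ∫ t in (0 : ℝ)..q,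
    (β / |Real.log (1 - q)|) * q * t ^ ((β / |Real.log (1 - q)|) + μ) *
        (1 - q * t) ^ (β / |Real.log (1 - q)|)
      / ((q - t) ^ (β / |Real.log (1 - q)|) * (1 - q * t))


noncomputable def fI (q e m : ℝ) : ℝ → ℝ := fun t =>
  e * q * t ^ (e + m) * (1 - q * t) ^ e / ((q - t) ^ e * (1 - q * t))

lemma integral_one_div_one_sub (q x y : ℝ) (hq : 0 < q)
    (h : ∀ t ∈ Set.uIcc x y, 0 < 1 - q * t) :
    ∫ t in x..y, 1 / (1 - q * t) = (Real.log (1 - q * x) - Real.log (1 - q * y)) / q := by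
  have hderiv : ∀ t ∈ Set.uIcc x y,
      HasDerivAt (fun s => -Real.log (1 - q * s) / q) (1 / (1 - q * t)) t := by
    intro t ht
    have h1 : HasDerivAt (fun s : ℝ => 1 - q * s) (-q) t := by
      simpa using ((hasDerivAt_id t).const_mul q).const_sub 1
    have h2 := ((h1.log (ne_of_gt (h t ht))).neg).div_const q
    convert h2 using 1
    have hne : (1 : ℝ) - q * t ≠ 0 := ne_of_gt (h t ht)
    have hq' : q ≠ 0 := ne_of_gt hq
    case e'_9 => field_simp
    all_goals rfl
  have hcont : IntervalIntegrable (fun t => 1 / (1 - q * t)) volume x y := by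
    apply ContinuousOn.intervalIntegrable
    exact continuousOn_const.div
      ((continuous_const.sub (continuous_const.mul continuous_id)).continuousOn)
      (fun t ht => ne_of_gt (h t ht))
  rw [intervalIntegral.integral_eq_sub_of_hasDerivAt hderiv hcont]
  ring

lemma integral_rpow_sub (q c e : ℝ) (he : e < 1) :
    ∫ t in c..q, (q - t) ^ (-e) = (q - c) ^ (1 - e) / (1 - e) := by
  have h := intervalIntegral.integral_comp_sub_left (a := c) (b := q)
    (fun s : ℝ => s ^ (-e)) q
  simp only [sub_self] at h
  rw [show (fun t => (q - t) ^ (-e)) = (fun t => (fun s : ℝ => s ^ (-e)) (q - t)) from rfl] at *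
  rw [h, integral_rpow (Or.inl (by linarith : (-1:ℝ) < -e)),
    Real.zero_rpow (by intro hc; apply absurd hc; intro hc2; nlinarith : -e + 1 ≠ 0),
    show -e + 1 = 1 - e by ring]
  ring

lemma fI_nonneg (q e m : ℝ) (hq1 : q ≤ 1) (he : 0 ≤ e) {t : ℝ}
    (ht0 : 0 ≤ t) (htq : t ≤ q) : 0 ≤ fI q e m t := by
  have h1 : (0:ℝ) ≤ 1 - q * t := by nlinarith
  exact div_nonneg
    (mul_nonneg (mul_nonneg (mul_nonneg he (le_trans ht0 htq)) (Real.rpow_nonneg ht0 _))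
      (Real.rpow_nonneg h1 _))
    (mul_nonneg (Real.rpow_nonneg (by linarith) e) h1)

lemma fI_le_bound (q e m : ℝ) (hq0 : 0 < q) (hq1 : q < 1) (he0 : 0 < e) (hm : 0 < m)
    {t : ℝ} (ht0 : 0 ≤ t) (htq : t ≤ q) :
    fI q e m t ≤ (e * q / (1 - q ^ 2)) * (q - t) ^ (-e) := by
  rcases eq_or_lt_of_le htq with rfl | htq'
  · simp only [fI, sub_self, Real.zero_rpow (ne_of_gt he0),
      Real.zero_rpow (ne_of_lt (neg_neg_iff_pos.mpr he0)), zero_mul, div_zero, mul_zero, le_refl]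
  · have hD : (0:ℝ) < 1 - q * t := by nlinarith
    have hD2 : (0:ℝ) < 1 - q ^ 2 := by nlinarith
    have hDD : 1 - q ^ 2 ≤ 1 - q * t := by nlinarith
    have hA : (0:ℝ) < (q - t) ^ e := Real.rpow_pos_of_pos (by linarith) e
    have hT : t ^ (e + m) ≤ 1 :=
      Real.rpow_le_one ht0 (by linarith) (by positivity)
    have hP : (1 - q * t) ^ e ≤ 1 :=
      Real.rpow_le_one (le_of_lt hD) (by nlinarith) (le_of_lt he0)
    have key : fI q e m t ≤ (e * q) / ((q - t) ^ e * (1 - q ^ 2)) := by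
      apply div_le_div₀ (by positivity)
      · calc e * q * t ^ (e + m) * (1 - q * t) ^ e
            ≤ e * q * 1 * 1 := by
              apply mul_le_mul _ hP (Real.rpow_nonneg (le_of_lt hD) e) (by positivity)
              apply mul_le_mul_of_nonneg_left hT (by positivity)
          _ = e * q := by ring
      · positivity
      · exact mul_le_mul_of_nonneg_left hDD (le_of_lt hA)
    calc fI q e m t ≤ (e * q) / ((q - t) ^ e * (1 - q ^ 2)) := key
      _ = (e * q / (1 - q ^ 2)) * (q - t) ^ (-e) := by
          rw [Real.rpow_neg (by linarith : (0:ℝ) ≤ q - t)]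
          field_simp

lemma bound_integrable (q e C : ℝ) (he0 : 0 < e) (he1 : e < 1) :
    IntervalIntegrable (fun t => C * (q - t) ^ (-e)) volume 0 q := by
  have h := (intervalIntegral.intervalIntegrable_rpow' (by linarith : (-1:ℝ) < -e)
    (a := 0) (b := q)).comp_sub_left q
  simp only [sub_zero, sub_self] at h
  exact (h.symm.const_mul C)

lemma fI_integrable (q e m : ℝ) (hq0 : 0 < q) (hq1 : q < 1) (he0 : 0 < e) (he1 : e < 1)
    (hm : 0 < m) : IntervalIntegrable (fI q e m) volume 0 q := by
  rw [intervalIntegrable_iff_integrableOn_Ioc_of_le (le_of_lt hq0)]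
  have hbd := bound_integrable q e (e * q / (1 - q ^ 2)) he0 he1
  rw [intervalIntegrable_iff_integrableOn_Ioc_of_le (le_of_lt hq0)] at hbd
  apply hbd.mono' ?_ ?_
  · apply Measurable.aestronglyMeasurable
    unfold fI
    have c1 : Continuous fun t : ℝ => e * q * t ^ (e + m) * (1 - q * t) ^ e :=
      ((continuous_const.mul (Real.continuous_rpow_const (by positivity))).mul
        ((Real.continuous_rpow_const he0.le).comp
          (continuous_const.sub (continuous_const.mul continuous_id))))
    have c2 : Continuous fun t : ℝ => (q - t) ^ e * (1 - q * t) :=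
      (((Real.continuous_rpow_const he0.le).comp (continuous_const.sub continuous_id)).mul
        (continuous_const.sub (continuous_const.mul continuous_id)))
    exact c1.measurable.div c2.measurable
  · filter_upwards [ae_restrict_mem measurableSet_Ioc] with t ht
    rw [Real.norm_of_nonneg (fI_nonneg q e m (le_of_lt hq1) (le_of_lt he0) (le_of_lt ht.1) ht.2)]
    exact fI_le_bound q e m hq0 hq1 he0 hm (le_of_lt ht.1) ht.2
lemma UB (q e m : ℝ) (hq2 : 1/2 < q) (hq1 : q < 1) (he0 : 0 < e) (he12 : e < 1/2)
    (hm : 0 < m) :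
    ∫ t in (0:ℝ)..q, fI q e m t
      ≤ e * 3 ^ e * (-Real.log (1 - q ^ 2)) + e * (1 - q) ^ (-e) / (1 - e) := by
  have hq0 : (0:ℝ) < q := by linarith
  have he1 : e < 1 := by linarith
  set c : ℝ := 2 * q - 1 with hc
  have hc0 : 0 < c := by simp [hc]; linarith
  have hcq : c < q := by simp [hc]; linarith
  have hint := fI_integrable q e m hq0 hq1 he0 he1 hm
  have hsub1 : Set.uIcc 0 c ⊆ Set.uIcc 0 q := by
    rw [Set.uIcc_of_le (by linarith), Set.uIcc_of_le (by linarith)]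
    exact Set.Icc_subset_Icc (le_refl 0) (by linarith)
  have hsub2 : Set.uIcc c q ⊆ Set.uIcc 0 q := by
    rw [Set.uIcc_of_le (by linarith), Set.uIcc_of_le (by linarith)]
    exact Set.Icc_subset_Icc (by linarith) (le_refl q)
  have hi1 := hint.mono_set hsub1
  have hi2 := hint.mono_set hsub2
  rw [← intervalIntegral.integral_add_adjacent_intervals hi1 hi2]
  -- piece 1
  have hb1 : ∫ t in (0:ℝ)..c, fI q e m t
      ≤ ∫ t in (0:ℝ)..c, (e * q * 3 ^ e) * (1 / (1 - q * t)) := by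
    have hcont : IntervalIntegrable (fun t => (e * q * 3 ^ e) * (1 / (1 - q * t))) volume 0 c := by
      apply ContinuousOn.intervalIntegrable
      apply ContinuousOn.mul continuousOn_const
      apply ContinuousOn.div continuousOn_const
        ((continuous_const.sub (continuous_const.mul continuous_id)).continuousOn)
      intro t ht
      rw [Set.uIcc_of_le (by linarith)] at ht
      have h1 : q * t ≤ q * c := mul_le_mul_of_nonneg_left ht.2 (by linarith)
      have h2 : q * c < 1 := by nlinarith
      intro hzero
      simp only [Pi.sub_apply, Pi.mul_apply, id_eq] at hzero
      nlinarith
    apply intervalIntegral.integral_mono_on (by linarith) hi1 hcont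
    intro t ht
    obtain ⟨ht0, htc⟩ := ht
    have hqt : q * t < 1 := by nlinarith
    have hD : (0:ℝ) < 1 - q * t := by linarith
    rcases eq_or_lt_of_le ht0 with rfl | ht0'
    · have : fI q e m 0 = 0 := by
        simp [fI, Real.zero_rpow (ne_of_gt (by positivity : (0:ℝ) < e + m))]
      rw [this]
      have h3 : (0:ℝ) < 3 ^ e := Real.rpow_pos_of_pos (by norm_num) e
      have : (0:ℝ) < 1 / (1 - q * 0) := by norm_num
      positivity
    · have hqtq : t < q := by linarith
      have hA : (0:ℝ) < (q - t) ^ e := Real.rpow_pos_of_pos (by linarith) e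
      have hN3 : 1 - q * t ≤ 3 * (q - t) := by nlinarith
      have hNe : (1 - q * t) ^ e ≤ 3 ^ e * (q - t) ^ e := by
        rw [← Real.mul_rpow (by norm_num) (by linarith)]
        exact Real.rpow_le_rpow (by linarith) hN3 he0.le
      have hT : t ^ (e + m) ≤ 1 := Real.rpow_le_one ht0 (by linarith) (by positivity)
      have key : fI q e m t ≤ (e * q * 3 ^ e * (q - t) ^ e) / ((q - t) ^ e * (1 - q * t)) := by
        apply div_le_div₀ (by positivity) ?_ (by positivity) (le_refl _)
        calc e * q * t ^ (e + m) * (1 - q * t) ^ e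
            ≤ e * q * 1 * (3 ^ e * (q - t) ^ e) := by
              apply mul_le_mul _ hNe (Real.rpow_nonneg hD.le e) (by positivity)
              exact mul_le_mul_of_nonneg_left hT (by positivity)
          _ = e * q * 3 ^ e * (q - t) ^ e := by ring
      calc fI q e m t ≤ (e * q * 3 ^ e * (q - t) ^ e) / ((q - t) ^ e * (1 - q * t)) := key
        _ = (e * q * 3 ^ e) * (1 / (1 - q * t)) := by
            field_simp
  have heval1 : ∫ t in (0:ℝ)..c, (e * q * 3 ^ e) * (1 / (1 - q * t))
      = e * 3 ^ e * (-Real.log (1 - q * c)) := by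
    rw [intervalIntegral.integral_const_mul,
      integral_one_div_one_sub q 0 c hq0 (by
        intro t ht
        rw [Set.uIcc_of_le (by linarith)] at ht
        nlinarith [ht.1, ht.2])]
    rw [mul_zero, sub_zero, Real.log_one]
    field_simp
    ring
  have hlog1 : e * 3 ^ e * (-Real.log (1 - q * c)) ≤ e * 3 ^ e * (-Real.log (1 - q ^ 2)) := by
    apply mul_le_mul_of_nonneg_left _ (by positivity)
    have h1 : (0:ℝ) < 1 - q ^ 2 := by nlinarith
    have h2 : 1 - q ^ 2 ≤ 1 - q * c := by nlinarith
    simpa using Real.log_le_log h1 h2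
  -- piece 2
  have hb2 : ∫ t in c..q, fI q e m t
      ≤ ∫ t in c..q, (e * q / (1 - q ^ 2)) * (q - t) ^ (-e) := by
    apply intervalIntegral.integral_mono_on (by linarith) hi2
      ((bound_integrable q e _ he0 he1).mono_set hsub2)
    intro t ht
    exact fI_le_bound q e m hq0 hq1 he0 hm (by linarith [ht.1]) ht.2
  have heval2 : ∫ t in c..q, (e * q / (1 - q ^ 2)) * (q - t) ^ (-e)
      = (e * q / (1 - q ^ 2)) * ((1 - q) ^ (1 - e) / (1 - e)) := by
    rw [intervalIntegral.integral_const_mul, integral_rpow_sub q c e he1]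
    norm_num [hc]
    left
    ring_nf
  have hP : (0:ℝ) ≤ (1 - q) ^ (-e) := Real.rpow_nonneg (by linarith) _
  have hfinal2 : (e * q / (1 - q ^ 2)) * ((1 - q) ^ (1 - e) / (1 - e))
      ≤ e * (1 - q) ^ (-e) / (1 - e) := by
    rw [show (1:ℝ) - e = 1 + -e by ring, Real.rpow_add (by linarith : (0:ℝ) < 1 - q),
      Real.rpow_one]
    set P := (1 - q) ^ (-e) with hPdef
    have h1e : (0:ℝ) < 1 + -e := by linarith
    have hq2' : (0:ℝ) < 1 - q ^ 2 := by nlinarith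
    have heq : e * q / (1 - q ^ 2) * ((1 - q) * P / (1 + -e)) = e * q * P / ((1 + q) * (1 + -e)) := by
      rw [div_mul_div_comm, div_eq_div_iff (by positivity) (by positivity)]
      ring
    rw [heq, div_le_div_iff₀ (by positivity) h1e]
    nlinarith [mul_nonneg (mul_nonneg he0.le hP) h1e.le]
  linarith

lemma LB (q e m a : ℝ) (ha0 : 0 < a) (haq : a < q) (hq1 : q < 1) (he0 : 0 < e)
    (he1 : e < 1) (hm : 0 < m) :
    e * a ^ (e + m) * (Real.log (1 - q * a) - Real.log (1 - q ^ 2))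
      ≤ ∫ t in (0:ℝ)..q, fI q e m t := by
  have hq0 : (0:ℝ) < q := lt_trans ha0 haq
  have hint := fI_integrable q e m hq0 hq1 he0 he1 hm
  have hsub1 : Set.uIcc 0 a ⊆ Set.uIcc 0 q := by
    rw [Set.uIcc_of_le (by linarith), Set.uIcc_of_le (by linarith)]
    exact Set.Icc_subset_Icc (le_refl 0) (by linarith)
  have hsub2 : Set.uIcc a q ⊆ Set.uIcc 0 q := by
    rw [Set.uIcc_of_le (by linarith), Set.uIcc_of_le (by linarith)]
    exact Set.Icc_subset_Icc (by linarith) (le_refl q)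
  have hi1 := hint.mono_set hsub1
  have hi2 := hint.mono_set hsub2
  rw [← intervalIntegral.integral_add_adjacent_intervals hi1 hi2]
  have h1 : 0 ≤ ∫ t in (0:ℝ)..a, fI q e m t :=
    intervalIntegral.integral_nonneg (le_of_lt ha0)
      (fun u hu => fI_nonneg q e m hq1.le he0.le hu.1 (le_trans hu.2 haq.le))
  have hg_int : IntervalIntegrable
      (fun t => (e * q * a ^ (e + m)) * (1 / (1 - q * t))) volume a q := by
    apply ContinuousOn.intervalIntegrable
    apply ContinuousOn.mul continuousOn_const
    apply ContinuousOn.div continuousOn_const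
      ((continuous_const.sub (continuous_const.mul continuous_id)).continuousOn)
    intro t ht
    rw [Set.uIcc_of_le (by linarith)] at ht
    intro hzero
    simp only [Pi.sub_apply, Pi.mul_apply, id_eq] at hzero
    nlinarith [ht.1, ht.2]
  have h2 : ∫ t in a..q, (e * q * a ^ (e + m)) * (1 / (1 - q * t))
      ≤ ∫ t in a..q, fI q e m t := by
    apply intervalIntegral.integral_mono_ae_restrict haq.le hg_int hi2
    have hae : ∀ᵐ t ∂(volume.restrict (Set.Icc a q)), t ≠ q := by
      have hset : {t : ℝ | ¬ t ≠ q} = {q} := by ext; simp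
      rw [ae_iff, hset, Measure.restrict_apply (measurableSet_singleton q)]
      exact measure_mono_null Set.inter_subset_left Real.volume_singleton
    filter_upwards [hae, ae_restrict_mem measurableSet_Icc] with t htne ht
    have htq : t < q := lt_of_le_of_ne ht.2 htne
    have ht0 : 0 < t := lt_of_lt_of_le ha0 ht.1
    have hD : (0:ℝ) < 1 - q * t := by nlinarith
    have hA : (0:ℝ) < (q - t) ^ e := Real.rpow_pos_of_pos (by linarith) e
    have hT : a ^ (e + m) ≤ t ^ (e + m) := Real.rpow_le_rpow ha0.le ht.1 (by positivity)
    have hNA : (q - t) ^ e ≤ (1 - q * t) ^ e :=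
      Real.rpow_le_rpow (by linarith) (by nlinarith) he0.le
    have hTpos : (0:ℝ) ≤ t ^ (e + m) := Real.rpow_nonneg ht0.le _
    have key : (e * q * a ^ (e + m) * (q - t) ^ e) / ((q - t) ^ e * (1 - q * t))
        ≤ fI q e m t := by
      apply div_le_div₀ ?_ ?_ (by positivity) (le_refl _)
      · exact mul_nonneg (mul_nonneg (mul_nonneg he0.le hq0.le) hTpos)
          (Real.rpow_nonneg hD.le _)
      · apply mul_le_mul _ hNA hA.le (mul_nonneg (mul_nonneg he0.le hq0.le) hTpos)
        exact mul_le_mul_of_nonneg_left hT (mul_nonneg he0.le hq0.le)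
    calc (e * q * a ^ (e + m)) * (1 / (1 - q * t))
        = (e * q * a ^ (e + m) * (q - t) ^ e) / ((q - t) ^ e * (1 - q * t)) := by
          field_simp
      _ ≤ fI q e m t := key
  have heval : ∫ t in a..q, (e * q * a ^ (e + m)) * (1 / (1 - q * t))
      = e * a ^ (e + m) * (Real.log (1 - q * a) - Real.log (1 - q ^ 2)) := by
    rw [intervalIntegral.integral_const_mul,
      integral_one_div_one_sub q a q hq0 (by
        intro t ht
        rw [Set.uIcc_of_le (by linarith)] at ht
        nlinarith [ht.1, ht.2])]
    rw [show q * q = q ^ 2 by ring]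
    field_simp
  linarith

/-- For every fixed `μ > 0`, `F₋(μ,q) → β` as `q → 1⁻`; more precisely
`F₋(μ,q) ∼ −ε·log(1−q²)` as `q → 1⁻`. -/
theorem stmt_19 (β : ℝ) (hβ : 0 < β) (μ : ℝ) (hμ : 0 < μ) :
    Tendsto (fun q : ℝ => Fminus β μ q)
      (nhdsWithin 1 (Set.Ioo (0 : ℝ) 1)) (nhds β) ∧
    Tendsto (fun q : ℝ =>
        Fminus β μ q / (-(β / |Real.log (1 - q)|) * Real.log (1 - q ^ 2)))
      (nhdsWithin 1 (Set.Ioo (0 : ℝ) 1)) (nhds 1) := by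
  set l := nhdsWithin (1:ℝ) (Set.Ioo (0 : ℝ) 1) with hldef
  have hmem : ∀ᶠ q in l, q ∈ Set.Ioo (0:ℝ) 1 := self_mem_nhdsWithin
  have hhalf : ∀ᶠ q in l, (1:ℝ)/2 < q :=
    eventually_nhdsWithin_of_eventually_nhds (eventually_gt_nhds (by norm_num))
  -- 1 - q → 0⁺
  have ht1 : Tendsto (fun q : ℝ => 1 - q) l (𝓝[>] 0) := by
    rw [tendsto_nhdsWithin_iff]
    constructor
    · have h : Tendsto (fun q : ℝ => 1 - q) (𝓝 1) (𝓝 (1 - 1)) :=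
        (continuous_const.sub continuous_id).tendsto 1
      rw [sub_self] at h
      exact h.mono_left nhdsWithin_le_nhds
    · filter_upwards [hmem] with q hq
      exact Set.mem_Ioi.mpr (by linarith [hq.2])
  -- L → ∞
  have hL : Tendsto (fun q : ℝ => -Real.log (1 - q)) l atTop :=
    tendsto_neg_atTop_iff.mpr (Real.tendsto_log_nhdsGT_zero.comp ht1)
  have hLpos : ∀ᶠ q in l, 0 < -Real.log (1 - q) := hL.eventually_gt_atTop 0
  have hL1 : ∀ᶠ q in l, 1 < -Real.log (1 - q) := hL.eventually_gt_atTop 1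
  have habs : ∀ᶠ q in l, |Real.log (1 - q)| = -Real.log (1 - q) := by
    filter_upwards [hmem] with q hq
    exact abs_of_neg (Real.log_neg (by linarith [hq.1, hq.2]) (by linarith [hq.1]))
  -- ε → 0⁺
  have heps : Tendsto (fun q : ℝ => β / (-Real.log (1 - q))) l (𝓝 0) :=
    tendsto_const_nhds.div_atTop hL
  have hepspos : ∀ᶠ q in l, 0 < β / (-Real.log (1 - q)) := by
    filter_upwards [hLpos] with q hq
    positivity
  have hepshalf : ∀ᶠ q in l, β / (-Real.log (1 - q)) < 1/2 :=
    heps.eventually (eventually_lt_nhds (by norm_num))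
  -- log (1+q) → log 2
  have hlog2 : Tendsto (fun q : ℝ => Real.log (1 + q)) l (𝓝 (Real.log 2)) := by
    have hc1 : ContinuousAt (fun q : ℝ => 1 + q) 1 := by fun_prop
    have hc : ContinuousAt (fun q : ℝ => Real.log (1 + q)) 1 :=
      (Real.continuousAt_log (show (1:ℝ) + 1 ≠ 0 by norm_num)).comp hc1
    have h2 : Tendsto (fun q : ℝ => Real.log (1 + q)) l (𝓝 (Real.log (1 + 1))) :=
      hc.tendsto.mono_left (nhdsWithin_le_nhds (s := Set.Ioo (0:ℝ) 1))
    norm_num at h2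
    exact h2
  have hdiv2 : Tendsto (fun q : ℝ => Real.log (1 + q) / (-Real.log (1 - q))) l (𝓝 0) :=
    hlog2.div_atTop hL
  -- main term
  have hMain : Tendsto (fun q : ℝ => (β / (-Real.log (1 - q))) * (-Real.log (1 - q ^ 2)))
      l (𝓝 β) := by
    have key : ∀ᶠ q in l,
        β * (1 - Real.log (1 + q) / (-Real.log (1 - q)))
          = (β / (-Real.log (1 - q))) * (-Real.log (1 - q ^ 2)) := by
      filter_upwards [hmem, hLpos] with q hq hLq
      have h1 : 1 - q ^ 2 = (1 - q) * (1 + q) := by ring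
      rw [h1, Real.log_mul (by linarith [hq.1, hq.2]) (by linarith [hq.1])]
      have hLne : Real.log (1 - q) ≠ 0 := by intro h; rw [h] at hLq; simp at hLq
      field_simp
      ring_nf
      try tauto
    have h2 : Tendsto (fun q : ℝ => β * (1 - Real.log (1 + q) / (-Real.log (1 - q))))
        l (𝓝 (β * (1 - 0))) := (tendsto_const_nhds.sub hdiv2).const_mul β
    rw [show β * (1 - 0) = β by ring] at h2
    exact h2.congr' key
  -- log L / L → 0
  have hLogL : Tendsto (fun q : ℝ =>
      Real.log (-Real.log (1 - q)) / (-Real.log (1 - q))) l (𝓝 0) :=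
    (Real.isLittleO_log_id_atTop.tendsto_div_nhds_zero).comp hL
  -- lower main term
  have hLo2 : Tendsto (fun q : ℝ => (β / (-Real.log (1 - q))) *
      (-Real.log (-Real.log (1 - q)) - Real.log (1 - q ^ 2))) l (𝓝 β) := by
    have key : ∀ᶠ q in l,
        β * (1 - Real.log (-Real.log (1 - q)) / (-Real.log (1 - q))
            - Real.log (1 + q) / (-Real.log (1 - q)))
          = (β / (-Real.log (1 - q))) *
            (-Real.log (-Real.log (1 - q)) - Real.log (1 - q ^ 2)) := by
      filter_upwards [hmem, hLpos] with q hq hLq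
      have h1 : 1 - q ^ 2 = (1 - q) * (1 + q) := by ring
      rw [h1, Real.log_mul (by linarith [hq.1, hq.2]) (by linarith [hq.1])]
      have hLne : Real.log (1 - q) ≠ 0 := by intro h; rw [h] at hLq; simp at hLq
      field_simp
      ring_nf
      try tauto
    have h2 : Tendsto (fun q : ℝ => β * (1 - Real.log (-Real.log (1 - q)) / (-Real.log (1 - q))
        - Real.log (1 + q) / (-Real.log (1 - q)))) l (𝓝 (β * (1 - 0 - 0))) :=
      ((tendsto_const_nhds.sub hLogL).sub hdiv2).const_mul β
    rw [show β * (1 - 0 - 0) = β by ring] at h2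
    exact h2.congr' key
  -- a^(e+μ) → 1
  have haX : Tendsto (fun q : ℝ =>
      (1 - 1 / (-Real.log (1 - q))) ^ (β / (-Real.log (1 - q)) + μ)) l (𝓝 1) := by
    have h1 : Tendsto (fun q : ℝ => 1 - 1 / (-Real.log (1 - q))) l (𝓝 1) := by
      have h0 : Tendsto (fun _ : ℝ => (1:ℝ)) l (𝓝 1) := tendsto_const_nhds
      have h := h0.sub hL.inv_tendsto_atTop
      simp only [sub_zero] at h
      exact h.congr (fun q => by simp [one_div])
    have h2 : Tendsto (fun q : ℝ => β / (-Real.log (1 - q)) + μ) l (𝓝 μ) := by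
      have := heps.add (tendsto_const_nhds (x := μ))
      simpa using this
    have h3 := h1.rpow h2 (Or.inl one_ne_zero)
    rw [Real.one_rpow] at h3
    exact h3
  -- Lo → β
  have hLo : Tendsto (fun q : ℝ => (β / (-Real.log (1 - q))) *
      ((1 - 1 / (-Real.log (1 - q))) ^ (β / (-Real.log (1 - q)) + μ)) *
      (-Real.log (-Real.log (1 - q)) - Real.log (1 - q ^ 2))) l (𝓝 β) := by
    have := hLo2.mul haX
    rw [mul_one] at this
    exact this.congr (fun q => by ring)
  -- Hi → β
  have h3e : Tendsto (fun q : ℝ => (3:ℝ) ^ (β / (-Real.log (1 - q)))) l (𝓝 1) := by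
    have := (tendsto_const_nhds (x := (3:ℝ))).rpow heps (Or.inl (by norm_num))
    rwa [Real.rpow_zero] at this
  have hHi1 : Tendsto (fun q : ℝ => (β / (-Real.log (1 - q))) *
      3 ^ (β / (-Real.log (1 - q))) * (-Real.log (1 - q ^ 2))) l (𝓝 β) := by
    have := hMain.mul h3e
    rw [mul_one] at this
    exact this.congr (fun q => by ring)
  have hHi2 : Tendsto (fun q : ℝ => (β / (-Real.log (1 - q))) *
      (1 - q) ^ (-(β / (-Real.log (1 - q)))) / (1 - β / (-Real.log (1 - q)))) l (𝓝 0) := by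
    have key : ∀ᶠ q in l, (β / (-Real.log (1 - q))) * Real.exp β / (1 - β / (-Real.log (1 - q)))
        = (β / (-Real.log (1 - q))) *
          (1 - q) ^ (-(β / (-Real.log (1 - q)))) / (1 - β / (-Real.log (1 - q))) := by
      filter_upwards [hmem, hLpos] with q hq hLq
      have hexp : (1 - q) ^ (-(β / (-Real.log (1 - q)))) = Real.exp β := by
        rw [Real.rpow_def_of_pos (by linarith [hq.2])]
        congr 1
        have hLne : Real.log (1 - q) ≠ 0 := by
          intro h; rw [h] at hLq; simp at hLq
        field_simp
      rw [hexp]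
    have h2 : Tendsto (fun q : ℝ => (β / (-Real.log (1 - q))) * Real.exp β
        / (1 - β / (-Real.log (1 - q)))) l (𝓝 (0 * Real.exp β / (1 - 0))) := by
      apply Tendsto.div ((heps.mul tendsto_const_nhds)) (tendsto_const_nhds.sub heps)
      norm_num
    rw [show (0:ℝ) * Real.exp β / (1 - 0) = 0 by norm_num] at h2
    exact h2.congr' key
  have hHi : Tendsto (fun q : ℝ => (β / (-Real.log (1 - q))) *
      3 ^ (β / (-Real.log (1 - q))) * (-Real.log (1 - q ^ 2)) +
      (β / (-Real.log (1 - q))) * (1 - q) ^ (-(β / (-Real.log (1 - q)))) /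
        (1 - β / (-Real.log (1 - q)))) l (𝓝 β) := by
    have := hHi1.add hHi2
    rwa [add_zero] at this
  -- eventual upper bound
  have hFle : ∀ᶠ q in l, Fminus β μ q ≤ (β / (-Real.log (1 - q))) *
      3 ^ (β / (-Real.log (1 - q))) * (-Real.log (1 - q ^ 2)) +
      (β / (-Real.log (1 - q))) * (1 - q) ^ (-(β / (-Real.log (1 - q)))) /
        (1 - β / (-Real.log (1 - q))) := by
    filter_upwards [hmem, habs, hhalf, hepspos, hepshalf] with q hq habsq hhq hep hep2
    have hF : Fminus β μ q = ∫ t in (0:ℝ)..q, fI q (β / (-Real.log (1 - q))) μ t := by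
      unfold Fminus fI
      rw [habsq]
    rw [hF]
    exact UB q _ μ hhq hq.2 hep hep2 hμ
  -- eventual lower bound
  have hFge : ∀ᶠ q in l, (β / (-Real.log (1 - q))) *
      ((1 - 1 / (-Real.log (1 - q))) ^ (β / (-Real.log (1 - q)) + μ)) *
      (-Real.log (-Real.log (1 - q)) - Real.log (1 - q ^ 2)) ≤ Fminus β μ q := by
    filter_upwards [hmem, habs, hL1, hepspos, hepshalf] with q hq habsq hLq hep hep2
    have hLq0 : (0:ℝ) < -Real.log (1 - q) := by linarith
    set L : ℝ := -Real.log (1 - q) with hLdef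
    set a : ℝ := 1 - 1 / L with hadef
    have ha0 : 0 < a := by
      have : 1 / L < 1 := by rw [div_lt_one hLq0]; exact hLq
      simp only [hadef]; linarith
    have h1q : (0:ℝ) < 1 - q := by linarith [hq.2]
    have hlt : L < (1 - q)⁻¹ := by
      have h2 := Real.log_le_sub_one_of_pos (inv_pos.mpr h1q)
      have h1 : Real.log ((1 - q)⁻¹) = L := by rw [Real.log_inv]
      rw [h1] at h2
      nlinarith [inv_pos.mpr h1q]
    have haq : a < q := by
      have hq1L : 1 - q < 1 / L := by
        rw [lt_div_iff₀ hLq0]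
        calc (1 - q) * L < (1 - q) * (1 - q)⁻¹ := mul_lt_mul_of_pos_left hlt h1q
          _ = 1 := mul_inv_cancel₀ (ne_of_gt h1q)
      simp only [hadef]; linarith
    have hLB := LB q (β / L) μ a ha0 haq hq.2 hep (by linarith) hμ
    have hF : Fminus β μ q = ∫ t in (0:ℝ)..q, fI q (β / L) μ t := by
      unfold Fminus fI
      rw [habsq]
    rw [hF]
    refine le_trans ?_ hLB
    apply mul_le_mul_of_nonneg_left ?_
      (mul_nonneg hep.le (Real.rpow_nonneg ha0.le _))
    have h1a : 1 / L ≤ 1 - q * a := by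
      have hqa : q * a ≤ a := by nlinarith [hq.2]
      simp only [hadef] at hqa ⊢
      linarith
    have hpos : (0:ℝ) < 1 / L := by positivity
    have hloglog : -Real.log L ≤ Real.log (1 - q * a) := by
      have h2 : Real.log (1 / L) ≤ Real.log (1 - q * a) := Real.log_le_log hpos h1a
      rwa [one_div, Real.log_inv] at h2
    linarith
  have hFlim : Tendsto (fun q : ℝ => Fminus β μ q) l (𝓝 β) :=
    tendsto_of_tendsto_of_tendsto_of_le_of_le' hLo hHi hFge hFle
  have hD : Tendsto (fun q : ℝ => -(β / |Real.log (1 - q)|) * Real.log (1 - q ^ 2))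
      l (𝓝 β) := by
    apply hMain.congr'
    filter_upwards [habs] with q habsq
    rw [habsq]
    ring
  have hratio := hFlim.div hD (ne_of_gt hβ)
  rw [div_self (ne_of_gt hβ)] at hratio
  exact ⟨hFlim, hratio⟩
end
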